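/- arXiv:1304.1191 — 6 statements merged into one kernel-verified Lean document; each statement's English description precedes it below -/
import Mathlib

section
/- Let 0 < α < 1 and let Q be a multiplier of the weighted Dirichlet space D_α, i.e. an analytic function on the open unit disk 𝔻 such that multiplication by Q is a bounded operator on D_α with operator norm ‖M_Q‖. Then (1 − |z|²)·|Q'(z)| ≤ ‖M_Q‖ for all z ∈ 𝔻. -/
open MeasureTheory Real

/-- The `n`-th Taylor coefficient of `f` at `0`. -/
noncomputable def taylorCoeff (f : ℂ → ℂ) (n : ℕ) : ℂ :=
  iteratedDeriv n f 0 / (n.factorial : ℂ)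

/-- The squared norm of `f` in the weighted Dirichlet space `D_α`:
`‖f‖² = Σ_n (n+1)^α |a_n|²` where `a_n` are the Taylor coefficients of `f` at `0`. -/
noncomputable def dirNormSq (α : ℝ) (f : ℂ → ℂ) : ℝ :=
  ∑' n : ℕ, ((n : ℝ) + 1) ^ α * ‖taylorCoeff f n‖ ^ 2

/-- Membership in the weighted Dirichlet space `D_α`: `f` is analytic on the open
unit disk and `Σ_n (n+1)^α |a_n|² < ∞`. -/
def MemDirichlet (α : ℝ) (f : ℂ → ℂ) : Prop :=
  DifferentiableOn ℂ f (Metric.ball (0:ℂ) 1) ∧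
    Summable fun n : ℕ => ((n : ℝ) + 1) ^ α * ‖taylorCoeff f n‖ ^ 2

/-- `φ` is a multiplier of `D_α`: `φ` is analytic on the open unit disk and
`φ f ∈ D_α` for every `f ∈ D_α`. -/
def IsMultiplier (α : ℝ) (φ : ℂ → ℂ) : Prop :=
  DifferentiableOn ℂ φ (Metric.ball (0:ℂ) 1) ∧
    ∀ f : ℂ → ℂ, MemDirichlet α f → MemDirichlet α fun z => φ z * f z

lemma hasSum_taylor {f : ℂ → ℂ} (hf : DifferentiableOn ℂ f (Metric.ball (0:ℂ) 1))
    {z : ℂ} (hz : ‖z‖ < 1) :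
    HasSum (fun n : ℕ => taylorCoeff f n * z ^ n) (f z) := by
  obtain ⟨r, hr1, hr2⟩ := exists_between hz
  have hr0 : 0 < r := lt_of_le_of_lt (norm_nonneg z) hr1
  lift r to NNReal using hr0.le with R
  have hd : DifferentiableOn ℂ f (Metric.closedBall 0 (R:ℝ)) := by
    apply hf.mono
    intro w hw
    simp only [Metric.mem_closedBall, Metric.mem_ball] at *
    exact lt_of_le_of_lt hw hr2
  have h := hd.hasFPowerSeriesOnBall (by exact_mod_cast hr0)
  have hcoeff : ∀ n, (cauchyPowerSeries f 0 R).coeff n = taylorCoeff f n := by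
    intro n
    have h2 := h.factorial_smul (1:ℂ) n
    rw [FormalMultilinearSeries.apply_eq_pow_smul_coeff, one_pow, one_smul] at h2
    rw [← iteratedDeriv_eq_iteratedFDeriv] at h2
    rw [taylorCoeff, ← h2, nsmul_eq_mul,
      mul_div_cancel_left₀ _ (by exact_mod_cast n.factorial_ne_zero : (n.factorial : ℂ) ≠ 0)]
  have hsum := h.hasSum_sub (y := z) (by
    rw [EMetric.mem_ball, edist_zero_right]
    exact_mod_cast hr1)
  simp only [sub_zero, FormalMultilinearSeries.apply_eq_pow_smul_coeff, smul_eq_mul] at hsum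
  have hfun : (fun n : ℕ => taylorCoeff f n * z ^ n) =
      fun n => z ^ n * (cauchyPowerSeries f 0 R).coeff n := by
    funext n; rw [hcoeff n]; ring
  rw [hfun]; exact hsum

lemma dir_term_nonneg (α : ℝ) (f : ℂ → ℂ) (n : ℕ) :
    0 ≤ ((n : ℝ) + 1) ^ α * ‖taylorCoeff f n‖ ^ 2 :=
  mul_nonneg (Real.rpow_nonneg (by positivity) _) (sq_nonneg _)

lemma dirNormSq_nonneg (α : ℝ) (f : ℂ → ℂ) : 0 ≤ dirNormSq α f :=
  tsum_nonneg (dir_term_nonneg α f)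

lemma coeff_sq_le {α : ℝ} (hα : 0 ≤ α) {f : ℂ → ℂ} (hf : MemDirichlet α f) (n : ℕ) :
    ‖taylorCoeff f n‖ ^ 2 ≤ dirNormSq α f := by
  have h1 : (1:ℝ) ≤ ((n : ℝ) + 1) ^ α :=
    Real.one_le_rpow (by exact_mod_cast Nat.le_add_left 1 n) hα
  calc ‖taylorCoeff f n‖ ^ 2 ≤ ((n : ℝ) + 1) ^ α * ‖taylorCoeff f n‖ ^ 2 :=
        le_mul_of_one_le_left (sq_nonneg _) h1
    _ ≤ dirNormSq α f := Summable.le_tsum hf.2 n (fun m _ => dir_term_nonneg α f m)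

lemma point_eval {α : ℝ} (hα : 0 ≤ α) {f : ℂ → ℂ} (hf : MemDirichlet α f)
    {z : ℂ} (hz : ‖z‖ < 1) :
    ‖f z‖ ≤ Real.sqrt (dirNormSq α f) * (1 - ‖z‖)⁻¹ := by
  set S := Real.sqrt (dirNormSq α f) with hS
  have hS0 : 0 ≤ S := Real.sqrt_nonneg _
  have hcoeff : ∀ n, ‖taylorCoeff f n‖ ≤ S := by
    intro n
    rw [hS, ← Real.sqrt_sq (norm_nonneg (taylorCoeff f n))]
    exact Real.sqrt_le_sqrt (coeff_sq_le hα hf n)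
  have hsum := hasSum_taylor hf.1 hz
  have hterm : ∀ n : ℕ, ‖taylorCoeff f n * z ^ n‖ ≤ S * ‖z‖ ^ n := by
    intro n
    rw [norm_mul, norm_pow]
    exact mul_le_mul_of_nonneg_right (hcoeff n) (by positivity)
  have hgeom : Summable fun n : ℕ => S * ‖z‖ ^ n :=
    (summable_geometric_of_lt_one (norm_nonneg z) hz).mul_left S
  have hsummable : Summable fun n : ℕ => ‖taylorCoeff f n * z ^ n‖ :=
    Summable.of_nonneg_of_le (fun n => norm_nonneg _) hterm hgeom
  calc ‖f z‖ = ‖∑' n : ℕ, taylorCoeff f n * z ^ n‖ := by rw [hsum.tsum_eq]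
    _ ≤ ∑' n : ℕ, ‖taylorCoeff f n * z ^ n‖ := norm_tsum_le_tsum_norm hsummable
    _ ≤ ∑' n : ℕ, S * ‖z‖ ^ n := Summable.tsum_le_tsum hterm hsummable hgeom
    _ = S * (1 - ‖z‖)⁻¹ := by
        rw [tsum_mul_left, tsum_geometric_of_lt_one (norm_nonneg z) hz]

lemma iteratedDeriv_one_fun (n : ℕ) (x : ℂ) :
    iteratedDeriv n (fun _ : ℂ => (1:ℂ)) x = if n = 0 then 1 else 0 := by
  induction n generalizing x with
  | zero => simp [iteratedDeriv_zero]
  | succ m ih =>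
    rw [iteratedDeriv_succ]
    have : iteratedDeriv m (fun _ : ℂ => (1:ℂ)) = fun y => if m = 0 then 1 else 0 :=
      funext fun y => ih y
    rw [this]
    simp [deriv_const]

lemma taylorCoeff_one (n : ℕ) :
    taylorCoeff (fun _ : ℂ => (1:ℂ)) n = if n = 0 then 1 else 0 := by
  rw [taylorCoeff, iteratedDeriv_one_fun]
  rcases Nat.eq_zero_or_pos n with h | h
  · simp [h]
  · simp [Nat.pos_iff_ne_zero.mp h]

lemma memDirichlet_one (α : ℝ) : MemDirichlet α (fun _ : ℂ => (1:ℂ)) := by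
  constructor
  · exact differentiableOn_const 1
  · apply summable_of_ne_finset_zero (s := {0})
    intro n hn
    simp only [Finset.mem_singleton] at hn
    rw [taylorCoeff_one, if_neg hn]
    simp

lemma dirNormSq_one (α : ℝ) : dirNormSq α (fun _ : ℂ => (1:ℂ)) = 1 := by
  rw [dirNormSq]
  rw [tsum_eq_single 0]
  · rw [taylorCoeff_one]; simp
  · intro n hn
    rw [taylorCoeff_one, if_neg hn]; simp

lemma pow_mem_and_bound {α : ℝ} {Q : ℂ → ℂ} (hQ : IsMultiplier α Q) {K : ℝ}
    (hKbound : ∀ f : ℂ → ℂ, MemDirichlet α f →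
      dirNormSq α (fun z => Q z * f z) ≤ K ^ 2 * dirNormSq α f) (n : ℕ) :
    MemDirichlet α (fun z => Q z ^ n) ∧ dirNormSq α (fun z => Q z ^ n) ≤ K ^ (2 * n) := by
  induction n with
  | zero => simpa [pow_zero] using ⟨memDirichlet_one α, le_of_eq (dirNormSq_one α)⟩
  | succ m ih =>
    have heq : (fun z => Q z ^ (m + 1)) = fun z => Q z * Q z ^ m := by
      funext z; rw [pow_succ]; ring
    constructor
    · rw [heq]; exact hQ.2 _ ih.1
    · rw [heq]
      calc dirNormSq α (fun z => Q z * Q z ^ m) ≤ K ^ 2 * dirNormSq α (fun z => Q z ^ m) :=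
            hKbound _ ih.1
        _ ≤ K ^ 2 * K ^ (2 * m) :=
            mul_le_mul_of_nonneg_left ih.2 (sq_nonneg K)
        _ = K ^ (2 * (m + 1)) := by ring

lemma norm_Q_le {α : ℝ} (hα : 0 ≤ α) {Q : ℂ → ℂ} (hQ : IsMultiplier α Q) {K : ℝ} (hK : 0 ≤ K)
    (hKbound : ∀ f : ℂ → ℂ, MemDirichlet α f →
      dirNormSq α (fun z => Q z * f z) ≤ K ^ 2 * dirNormSq α f)
    {z : ℂ} (hz : ‖z‖ < 1) : ‖Q z‖ ≤ K := by
  set c : ℝ := (1 - ‖z‖)⁻¹ with hc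
  have hc0 : 0 < c := by rw [hc]; exact inv_pos.mpr (by linarith)
  have key : ∀ n : ℕ, ‖Q z‖ ^ n ≤ K ^ n * c := by
    intro n
    obtain ⟨hmem, hbound⟩ := pow_mem_and_bound hQ hKbound n
    have := point_eval hα hmem hz
    have hsqrt : Real.sqrt (dirNormSq α (fun z => Q z ^ n)) ≤ K ^ n := by
      rw [← Real.sqrt_sq (pow_nonneg hK n)]
      apply Real.sqrt_le_sqrt
      calc dirNormSq α (fun z => Q z ^ n) ≤ K ^ (2 * n) := hbound
        _ = (K ^ n) ^ 2 := by ring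
    calc ‖Q z‖ ^ n = ‖Q z ^ n‖ := (norm_pow _ _).symm
      _ ≤ Real.sqrt (dirNormSq α (fun z => Q z ^ n)) * c := this
      _ ≤ K ^ n * c := mul_le_mul_of_nonneg_right hsqrt hc0.le
  by_contra hcon
  push_neg at hcon
  rcases eq_or_lt_of_le hK with hK0 | hK0
  · have h1 := key 1
    rw [pow_one, pow_one, ← hK0, zero_mul] at h1
    exact absurd (le_antisymm h1 (norm_nonneg _)) (by intro h; rw [h, ← hK0] at hcon; exact lt_irrefl 0 hcon)
  · have hratio : 1 < ‖Q z‖ / K := (one_lt_div hK0).mpr hcon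
    obtain ⟨n, hn⟩ := pow_unbounded_of_one_lt c hratio
    have := key n
    rw [div_pow] at hn
    have hKn : 0 < K ^ n := pow_pos hK0 n
    rw [lt_div_iff₀ hKn] at hn
    nlinarith

lemma mobius_denom_ne {a w : ℂ} (ha : ‖a‖ < 1) (hw : ‖w‖ < 1) :
    (1 : ℂ) + (starRingEnd ℂ) a * w ≠ 0 := by
  intro h
  have h1 : ‖(starRingEnd ℂ) a * w‖ < 1 := by
    rw [norm_mul, RCLike.norm_conj]
    calc ‖a‖ * ‖w‖ ≤ ‖a‖ * 1 := mul_le_mul_of_nonneg_left hw.le (norm_nonneg a)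
      _ = ‖a‖ := mul_one _
      _ < 1 := ha
  have h2 : (starRingEnd ℂ) a * w = -1 := by linear_combination h
  rw [h2] at h1
  simp at h1

lemma mobius_normSq (a w : ℂ) :
    Complex.normSq (1 + (starRingEnd ℂ) a * w) - Complex.normSq (w + a) =
      (1 - Complex.normSq a) * (1 - Complex.normSq w) := by
  apply Complex.ofReal_injective
  push_cast
  rw [← Complex.mul_conj, ← Complex.mul_conj, ← Complex.mul_conj, ← Complex.mul_conj]
  simp only [map_add, map_mul, map_one, Complex.conj_conj]
  ring

lemma normSq_eq_norm_sq (z : ℂ) : Complex.normSq z = ‖z‖ ^ 2 := by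
  rw [Complex.normSq_eq_norm_sq]

lemma mobius_maps {a w : ℂ} (ha : ‖a‖ < 1) (hw : ‖w‖ < 1) :
    ‖(w + a) / (1 + (starRingEnd ℂ) a * w)‖ < 1 := by
  have hden := mobius_denom_ne ha hw
  have hkey := mobius_normSq a w
  have hna : Complex.normSq a < 1 := by
    rw [normSq_eq_norm_sq]; nlinarith [norm_nonneg a]
  have hnw : Complex.normSq w < 1 := by
    rw [normSq_eq_norm_sq]; nlinarith [norm_nonneg w]
  have hlt : Complex.normSq (w + a) < Complex.normSq (1 + (starRingEnd ℂ) a * w) := by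
    nlinarith [Complex.normSq_nonneg (w + a)]
  rw [norm_div, div_lt_one (norm_pos_iff.mpr hden)]
  apply lt_of_pow_lt_pow_left₀ 2 (norm_nonneg _)
  rw [← normSq_eq_norm_sq, ← normSq_eq_norm_sq]
  exact hlt

lemma mobius_hasDeriv (a : ℂ) :
    HasDerivAt (fun w : ℂ => (w + a) / (1 + (starRingEnd ℂ) a * w))
      (1 - (‖a‖ : ℂ) ^ 2) 0 := by
  have hnum : HasDerivAt (fun w : ℂ => w + a) 1 0 := (hasDerivAt_id 0).add_const a
  have hden : HasDerivAt (fun w : ℂ => (1:ℂ) + (starRingEnd ℂ) a * w) ((starRingEnd ℂ) a) 0 := by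
    simpa using ((hasDerivAt_id 0).const_mul ((starRingEnd ℂ) a)).const_add 1
  have h0 : (1 : ℂ) + (starRingEnd ℂ) a * 0 ≠ 0 := by simp
  have h := hnum.div hden h0
  refine h.congr_deriv ?_
  have : a * (starRingEnd ℂ) a = ((‖a‖ ^ 2 : ℝ) : ℂ) := by
    rw [Complex.mul_conj, ← normSq_eq_norm_sq]
  simp only [mul_zero, add_zero, one_mul, zero_add, one_pow, div_one]
  rw [this]
  push_cast
  ring

/-- If `Q` is a multiplier of `D_α` and `K` is any bound for the operator norm of
multiplication by `Q` on `D_α`, then `(1-|z|²)|Q'(z)| ≤ K` for all `z` in the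
unit disk. -/
theorem stmt5 (α : ℝ) (hα0 : 0 < α) (hα1 : α < 1) (Q : ℂ → ℂ)
    (hQ : IsMultiplier α Q) (K : ℝ) (hK : 0 ≤ K)
    (hKbound : ∀ f : ℂ → ℂ, MemDirichlet α f →
      dirNormSq α (fun z => Q z * f z) ≤ K ^ 2 * dirNormSq α f) :
    ∀ z ∈ Metric.ball (0:ℂ) 1, (1 - ‖z‖ ^ 2) * ‖deriv Q z‖ ≤ K := by
  intro z hz
  rw [Metric.mem_ball, dist_zero_right] at hz
  have hQle : ∀ w : ℂ, ‖w‖ < 1 → ‖Q w‖ ≤ K := fun w hw =>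
    norm_Q_le hα0.le hQ hK hKbound hw
  set φ : ℂ → ℂ := fun w => (w + z) / (1 + (starRingEnd ℂ) z * w) with hφ
  set g : ℂ → ℂ := Q ∘ φ with hg
  have hφ0 : φ 0 = z := by simp [hφ]
  have hφderiv : HasDerivAt φ (1 - (‖z‖ : ℂ) ^ 2) 0 := mobius_hasDeriv z
  have hQz : DifferentiableAt ℂ Q z :=
    hQ.1.differentiableAt (Metric.isOpen_ball.mem_nhds
      (by rw [Metric.mem_ball, dist_zero_right]; exact hz))
  have hQat : HasDerivAt Q (deriv Q z) (φ 0) := hφ0 ▸ hQz.hasDerivAt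
  have hgderiv : HasDerivAt g (deriv Q z * (1 - (‖z‖ : ℂ) ^ 2)) 0 := hQat.comp 0 hφderiv
  have hnorm : ‖deriv g 0‖ = (1 - ‖z‖ ^ 2) * ‖deriv Q z‖ := by
    rw [hgderiv.deriv, norm_mul]
    have h1 : (1 - (‖z‖ : ℂ) ^ 2) = ((1 - ‖z‖ ^ 2 : ℝ) : ℂ) := by push_cast; ring
    rw [h1, Complex.norm_real, Real.norm_eq_abs, abs_of_nonneg (by nlinarith [norm_nonneg z])]
    ring
  have key : ∀ r : ℝ, 0 < r → r < 1 → (1 - ‖z‖ ^ 2) * ‖deriv Q z‖ ≤ K / r := by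
    intro r hr0 hr1
    have hφat : ∀ w : ℂ, ‖w‖ < 1 → DifferentiableAt ℂ φ w := by
      intro w hw
      apply DifferentiableAt.div
      · exact differentiableAt_id.add_const z
      · exact (differentiableAt_const _).add ((differentiableAt_const _).mul differentiableAt_id)
      · exact mobius_denom_ne hz hw
    have hgdiff : DifferentiableOn ℂ g (Metric.closedBall 0 r) := by
      intro w hw
      rw [Metric.mem_closedBall, dist_zero_right] at hw
      have hw1 : ‖w‖ < 1 := lt_of_le_of_lt hw hr1
      have hφw : ‖φ w‖ < 1 := mobius_maps hz hw1
      have hQw : DifferentiableAt ℂ Q (φ w) :=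
        hQ.1.differentiableAt (Metric.isOpen_ball.mem_nhds
          (by rw [Metric.mem_ball, dist_zero_right]; exact hφw))
      exact (hQw.comp w (hφat w hw1)).differentiableWithinAt
    have hdcc : DiffContOnCl ℂ g (Metric.ball 0 r) := by
      apply DifferentiableOn.diffContOnCl
      rwa [closure_ball 0 (ne_of_gt hr0)]
    have hbound : ∀ w ∈ Metric.sphere (0:ℂ) r, ‖g w‖ ≤ K := by
      intro w hw
      rw [Metric.mem_sphere, dist_zero_right] at hw
      have hw1 : ‖w‖ < 1 := hw ▸ hr1
      exact hQle _ (mobius_maps hz hw1)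
    have := Complex.norm_deriv_le_of_forall_mem_sphere_norm_le hr0 hdcc hbound
    rwa [hnorm] at this
  by_contra hcon
  push_neg at hcon
  set X := (1 - ‖z‖ ^ 2) * ‖deriv Q z‖ with hX
  have hX0 : 0 < X := lt_of_le_of_lt hK hcon
  set r : ℝ := (K / X + 1) / 2 with hr
  have hKX0 : 0 ≤ K / X := div_nonneg hK hX0.le
  have hKX : K / X < 1 := (div_lt_one hX0).mpr hcon
  have hr0 : 0 < r := by rw [hr]; linarith
  have hr1 : r < 1 := by rw [hr]; linarith
  have h1 := key r hr0 hr1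
  have h2 : K < X * r := by
    have h3 : K / X < r := by rw [hr]; linarith
    calc K = X * (K / X) := by field_simp
      _ < X * r := mul_lt_mul_of_pos_left h3 hX0
  have h4 : K / r < X := (div_lt_iff₀ hr0).mpr (by linarith [mul_comm X r])
  linarith
end

section
/- Let 0 < α < 1 and let f : (0,1) → [0,∞) be measurable. Then ∫₀¹ ∫₀¹ f(u) f(v) ( ∫_{max{u,v}}^1 (1 − s²)^{1−α} s^{−1} ds ) u du · v dv ≤ (25/16) ∫₀¹ f(u)² (1 − u²)^{1−α} u du. -/
open MeasureTheory Real Set ENNReal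

namespace Stmt7Aux

noncomputable def g (α : ℝ) : ℝ → ℝ≥0∞ :=
  fun s => ENNReal.ofReal ((1 - s ^ 2) ^ (1 - α) * s⁻¹)

lemma g_meas (α : ℝ) : Measurable (g α) := by
  apply Measurable.ennreal_ofReal
  exact ((measurable_const.sub (measurable_id.pow_const 2)).pow measurable_const).mul
    measurable_inv

noncomputable def K (α : ℝ) (u v : ℝ) : ℝ≥0∞ := ∫⁻ s in Ioo (max u v) 1, g α s

lemma K_symm (α u v : ℝ) : K α u v = K α v u := by rw [K, K, max_comm u v]

lemma K_meas (α : ℝ) : Measurable (Function.uncurry (K α)) := by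
  have h : Function.uncurry (K α) =
      fun p : ℝ × ℝ => ∫⁻ s, ({q : (ℝ × ℝ) × ℝ | max q.1.1 q.1.2 < q.2 ∧ q.2 < 1}.indicator
        (fun q => g α q.2)) (p, s) := by
    funext p
    show K α p.1 p.2 = _
    rw [K, ← lintegral_indicator measurableSet_Ioo]
    congr 1
  rw [h]
  apply Measurable.lintegral_prod_right'
  apply Measurable.indicator ((g_meas α).comp measurable_snd)
  exact (measurableSet_lt ((measurable_fst.fst).max (measurable_fst.snd)) measurable_snd).inter
    (measurableSet_lt measurable_snd measurable_const)

lemma K_meas1 (α u : ℝ) : Measurable (K α u) :=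
  (K_meas α).of_uncurry_left

lemma K_le (α : ℝ) (hα1 : α < 1) {a : ℝ} (ha : 0 < a) (ha1 : a < 1) :
    K α a a ≤ ENNReal.ofReal ((1 - a ^ 2) ^ (1 - α) * a⁻¹ * (1 - a)) := by
  have hc0 : 0 ≤ (1 - a ^ 2) ^ (1 - α) * a⁻¹ :=
    mul_nonneg (Real.rpow_nonneg (by nlinarith) _) (by positivity)
  have hb : ∀ s ∈ Ioo a 1, g α s ≤ ENNReal.ofReal ((1 - a ^ 2) ^ (1 - α) * a⁻¹) := by
    intro s hs
    apply ENNReal.ofReal_le_ofReal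
    have hs0 : 0 < s := lt_trans ha hs.1
    have h1 : (1 - s ^ 2) ^ (1 - α) ≤ (1 - a ^ 2) ^ (1 - α) :=
      Real.rpow_le_rpow (by nlinarith [hs.2, hs0]) (by nlinarith [hs.1]) (by linarith)
    have h2 : s⁻¹ ≤ a⁻¹ := inv_anti₀ ha hs.1.le
    exact mul_le_mul h1 h2 (by positivity) (Real.rpow_nonneg (by nlinarith) _)
  calc K α a a ≤ ∫⁻ _ in Ioo (max a a) 1, ENNReal.ofReal ((1 - a ^ 2) ^ (1 - α) * a⁻¹) :=
        setLIntegral_mono measurable_const (by rw [max_self]; exact hb)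
    _ = ENNReal.ofReal ((1 - a ^ 2) ^ (1 - α) * a⁻¹) * volume (Ioo (max a a) 1) :=
        setLIntegral_const _ _
    _ = ENNReal.ofReal ((1 - a ^ 2) ^ (1 - α) * a⁻¹ * (1 - a)) := by
        rw [max_self, Real.volume_Ioo, ← ENNReal.ofReal_mul hc0]

lemma K_le' (α : ℝ) (hα1 : α < 1) {u v : ℝ} (hu : u ∈ Ioo (0:ℝ) 1) (hv : v ∈ Ioo (0:ℝ) 1) :
    K α u v ≤ ENNReal.ofReal
      ((1 - (max u v) ^ 2) ^ (1 - α) * (max u v)⁻¹ * (1 - max u v)) := by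
  have hM0 : 0 < max u v := lt_of_lt_of_le hu.1 (le_max_left _ _)
  have hM1 : max u v < 1 := max_lt hu.2 hv.2
  have h := K_le α hα1 hM0 hM1
  rwa [K, max_self] at h

lemma inner_bound (α : ℝ) (hα0 : 0 < α) (hα1 : α < 1) {u : ℝ} (hu : u ∈ Ioo (0:ℝ) 1) :
    ∫⁻ v in Ioo (0:ℝ) 1, K α u v * ENNReal.ofReal v ≤
      ENNReal.ofReal (25/16 * (1 - u ^ 2) ^ (1 - α)) := by
  have hu2 : (0:ℝ) < 1 - u ^ 2 := by nlinarith [hu.1, hu.2]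
  rcases le_or_gt (1/2 : ℝ) u with hhalf | hhalf
  · -- large u : pointwise bound by (1-u²)^(1-α)
    have hpt : ∀ v ∈ Ioo (0:ℝ) 1, K α u v * ENNReal.ofReal v ≤
        ENNReal.ofReal ((1 - u ^ 2) ^ (1 - α)) := by
      intro v hv
      set M := max u v with hM
      have hM0 : 0 < M := lt_of_lt_of_le hu.1 (le_max_left _ _)
      have hM1 : M < 1 := max_lt hu.2 hv.2
      have hMu : u ≤ M := le_max_left _ _
      calc K α u v * ENNReal.ofReal v
          ≤ ENNReal.ofReal ((1 - M ^ 2) ^ (1 - α) * M⁻¹ * (1 - M)) * ENNReal.ofReal v :=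
            mul_le_mul_left (K_le' α hα1 hu hv) _
        _ = ENNReal.ofReal ((1 - M ^ 2) ^ (1 - α) * M⁻¹ * (1 - M) * v) := by
            rw [← ENNReal.ofReal_mul]
            exact mul_nonneg (mul_nonneg (Real.rpow_nonneg (by nlinarith) _)
              (by positivity)) (by linarith)
        _ ≤ ENNReal.ofReal ((1 - u ^ 2) ^ (1 - α)) := by
            apply ENNReal.ofReal_le_ofReal
            have e1 : (1 - M ^ 2) ^ (1 - α) ≤ (1 - u ^ 2) ^ (1 - α) :=
              Real.rpow_le_rpow (by nlinarith) (by nlinarith) (by linarith)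
            have e0 : (0:ℝ) ≤ (1 - M ^ 2) ^ (1 - α) := Real.rpow_nonneg (by nlinarith) _
            have e2 : M⁻¹ * (1 - M) ≤ 1 := by
              have h1 : 1 - M ≤ M := by linarith [le_trans hhalf hMu]
              calc M⁻¹ * (1 - M) ≤ M⁻¹ * M :=
                    mul_le_mul_of_nonneg_left h1 (by positivity)
                _ = 1 := inv_mul_cancel₀ hM0.ne'
            have e3 : (0:ℝ) ≤ M⁻¹ * (1 - M) :=
              mul_nonneg (by positivity) (by linarith)
            nlinarith [hv.1, hv.2, mul_nonneg e0 e3]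
    calc ∫⁻ v in Ioo (0:ℝ) 1, K α u v * ENNReal.ofReal v
        ≤ ∫⁻ _ in Ioo (0:ℝ) 1, ENNReal.ofReal ((1 - u ^ 2) ^ (1 - α)) :=
          setLIntegral_mono measurable_const hpt
      _ = ENNReal.ofReal ((1 - u ^ 2) ^ (1 - α)) * volume (Ioo (0:ℝ) 1) :=
          setLIntegral_const _ _
      _ ≤ ENNReal.ofReal (25/16 * (1 - u ^ 2) ^ (1 - α)) := by
          rw [Real.volume_Ioo, show (1:ℝ) - 0 = 1 by norm_num, ENNReal.ofReal_one, mul_one]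
          apply ENNReal.ofReal_le_ofReal
          nlinarith [Real.rpow_nonneg hu2.le (1 - α)]
  · -- small u : pointwise bound by 1
    have hpt : ∀ v ∈ Ioo (0:ℝ) 1, K α u v * ENNReal.ofReal v ≤ (1 : ℝ≥0∞) := by
      intro v hv
      set M := max u v with hM
      have hM0 : 0 < M := lt_of_lt_of_le hu.1 (le_max_left _ _)
      have hM1 : M < 1 := max_lt hu.2 hv.2
      have hvM : v ≤ M := le_max_right _ _
      calc K α u v * ENNReal.ofReal v
          ≤ ENNReal.ofReal ((1 - M ^ 2) ^ (1 - α) * M⁻¹ * (1 - M)) * ENNReal.ofReal v :=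
            mul_le_mul_left (K_le' α hα1 hu hv) _
        _ = ENNReal.ofReal ((1 - M ^ 2) ^ (1 - α) * M⁻¹ * (1 - M) * v) := by
            rw [← ENNReal.ofReal_mul]
            exact mul_nonneg (mul_nonneg (Real.rpow_nonneg (by nlinarith) _)
              (by positivity)) (by linarith)
        _ ≤ (1 : ℝ≥0∞) := by
            rw [← ENNReal.ofReal_one]
            apply ENNReal.ofReal_le_ofReal
            have e1 : (1 - M ^ 2) ^ (1 - α) ≤ 1 :=
              Real.rpow_le_one (by nlinarith) (by nlinarith) (by linarith)
            have e0 : (0:ℝ) ≤ (1 - M ^ 2) ^ (1 - α) := Real.rpow_nonneg (by nlinarith) _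
            have e2 : M⁻¹ * v ≤ 1 := by
              calc M⁻¹ * v ≤ M⁻¹ * M := mul_le_mul_of_nonneg_left hvM (by positivity)
                _ = 1 := inv_mul_cancel₀ hM0.ne'
            have e3 : (0:ℝ) ≤ M⁻¹ * v := mul_nonneg (by positivity) hv.1.le
            nlinarith [mul_nonneg e0 e3]
    calc ∫⁻ v in Ioo (0:ℝ) 1, K α u v * ENNReal.ofReal v
        ≤ ∫⁻ _ in Ioo (0:ℝ) 1, (1:ℝ≥0∞) := setLIntegral_mono measurable_const hpt
      _ = volume (Ioo (0:ℝ) 1) := setLIntegral_one _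
      _ ≤ ENNReal.ofReal (25/16 * (1 - u ^ 2) ^ (1 - α)) := by
          rw [Real.volume_Ioo]
          apply ENNReal.ofReal_le_ofReal
          have h34 : (3/4 : ℝ) ≤ (1 - u ^ 2) ^ (1 - α) := by
            have h1 : ((1 - u ^ 2) : ℝ) ^ (1:ℝ) ≤ (1 - u ^ 2) ^ (1 - α) :=
              Real.rpow_le_rpow_of_exponent_ge hu2 (by nlinarith [hu.1]) (by linarith)
            rw [Real.rpow_one] at h1
            nlinarith [hu.1, hhalf]
          nlinarith

lemma key_prod_le (a b : ℝ) :
    ENNReal.ofReal a * ENNReal.ofReal b ≤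
      ENNReal.ofReal (a ^ 2 / 2) + ENNReal.ofReal (b ^ 2 / 2) := by
  rcases le_or_gt a 0 with ha | ha
  · rw [ENNReal.ofReal_eq_zero.mpr ha, zero_mul]
    exact zero_le
  rcases le_or_gt b 0 with hb | hb
  · rw [ENNReal.ofReal_eq_zero.mpr hb, mul_zero]
    exact zero_le
  rw [← ENNReal.ofReal_mul ha.le, ← ENNReal.ofReal_add (by positivity) (by positivity)]
  exact ENNReal.ofReal_le_ofReal (by nlinarith [sq_nonneg (a - b)])

noncomputable def P (α : ℝ) (f : ℝ → ℝ) (u v : ℝ) : ℝ≥0∞ :=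
  ENNReal.ofReal (f u ^ 2 / 2) * K α u v * ENNReal.ofReal u * ENNReal.ofReal v

noncomputable def Q (α : ℝ) (f : ℝ → ℝ) (u v : ℝ) : ℝ≥0∞ :=
  ENNReal.ofReal (f v ^ 2 / 2) * K α u v * ENNReal.ofReal u * ENNReal.ofReal v

lemma P_meas (α : ℝ) {f : ℝ → ℝ} (hf : Measurable f) :
    Measurable (Function.uncurry (P α f)) :=
  ((((((hf.comp measurable_fst).pow_const 2).div_const 2).ennreal_ofReal).mul
    (K_meas α)).mul measurable_fst.ennreal_ofReal).mul measurable_snd.ennreal_ofReal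

lemma Q_meas (α : ℝ) {f : ℝ → ℝ} (hf : Measurable f) :
    Measurable (Function.uncurry (Q α f)) :=
  ((((((hf.comp measurable_snd).pow_const 2).div_const 2).ennreal_ofReal).mul
    (K_meas α)).mul measurable_fst.ennreal_ofReal).mul measurable_snd.ennreal_ofReal

end Stmt7Aux

open Stmt7Aux

theorem stmt7 (α : ℝ) (hα0 : 0 < α) (hα1 : α < 1) (f : ℝ → ℝ)
    (hf : Measurable f) (hf0 : ∀ x ∈ Ioo (0:ℝ) 1, 0 ≤ f x) :
    ∫⁻ u in Ioo (0:ℝ) 1, ∫⁻ v in Ioo (0:ℝ) 1,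
        ENNReal.ofReal (f u) * ENNReal.ofReal (f v) *
          (∫⁻ s in Ioo (max u v) 1, ENNReal.ofReal ((1 - s^2) ^ (1 - α) * s⁻¹)) *
          ENNReal.ofReal u * ENNReal.ofReal v
      ≤ ENNReal.ofReal (25/16) *
        ∫⁻ u in Ioo (0:ℝ) 1, ENNReal.ofReal (f u ^ 2 * (1 - u^2) ^ (1 - α) * u) := by
  have hPm := P_meas α hf
  have hQm := Q_meas α hf
  have hPu : ∀ u, Measurable (P α f u) := fun u => hPm.of_uncurry_left
  -- Step 1 : pointwise AM-GM bound
  have step1 : ∫⁻ u in Ioo (0:ℝ) 1, ∫⁻ v in Ioo (0:ℝ) 1,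
      ENNReal.ofReal (f u) * ENNReal.ofReal (f v) * K α u v *
        ENNReal.ofReal u * ENNReal.ofReal v
      ≤ ∫⁻ u in Ioo (0:ℝ) 1, ∫⁻ v in Ioo (0:ℝ) 1, (P α f u v + Q α f u v) := by
    apply lintegral_mono; intro u
    apply lintegral_mono; intro v
    calc ENNReal.ofReal (f u) * ENNReal.ofReal (f v) * K α u v *
          ENNReal.ofReal u * ENNReal.ofReal v
        ≤ (ENNReal.ofReal (f u ^ 2 / 2) + ENNReal.ofReal (f v ^ 2 / 2)) * K α u v *
            ENNReal.ofReal u * ENNReal.ofReal v :=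
          mul_le_mul_left (mul_le_mul_left (mul_le_mul_left
            (key_prod_le (f u) (f v)) _) _) _
      _ = P α f u v + Q α f u v := by rw [P, Q]; ring
  -- Step 2 : split the sum
  have step2 : ∫⁻ u in Ioo (0:ℝ) 1, ∫⁻ v in Ioo (0:ℝ) 1, (P α f u v + Q α f u v)
      = (∫⁻ u in Ioo (0:ℝ) 1, ∫⁻ v in Ioo (0:ℝ) 1, P α f u v) +
          ∫⁻ u in Ioo (0:ℝ) 1, ∫⁻ v in Ioo (0:ℝ) 1, Q α f u v := by
    have h1 : ∀ u, ∫⁻ v in Ioo (0:ℝ) 1, (P α f u v + Q α f u v)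
        = (∫⁻ v in Ioo (0:ℝ) 1, P α f u v) + ∫⁻ v in Ioo (0:ℝ) 1, Q α f u v :=
      fun u => lintegral_add_left (hPu u) _
    simp_rw [h1]
    exact lintegral_add_left (Measurable.lintegral_prod_right' hPm) _
  -- Step 3 : by symmetry the two terms are equal
  have step3 : ∫⁻ u in Ioo (0:ℝ) 1, ∫⁻ v in Ioo (0:ℝ) 1, Q α f u v
      = ∫⁻ u in Ioo (0:ℝ) 1, ∫⁻ v in Ioo (0:ℝ) 1, P α f u v := by
    rw [lintegral_lintegral_swap hQm.aemeasurable]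
    apply lintegral_congr; intro a
    apply lintegral_congr; intro b
    rw [P, Q, K_symm]
    ring
  -- Step 4 : bound the inner integral
  have step4 : ∫⁻ u in Ioo (0:ℝ) 1, ∫⁻ v in Ioo (0:ℝ) 1, P α f u v
      ≤ ∫⁻ u in Ioo (0:ℝ) 1,
          ENNReal.ofReal (25/32 * (f u ^ 2 * (1 - u ^ 2) ^ (1 - α) * u)) := by
    apply lintegral_mono_ae
    filter_upwards [ae_restrict_mem measurableSet_Ioo] with u hu
    have e1 : ∫⁻ v in Ioo (0:ℝ) 1, P α f u v
        = ENNReal.ofReal (f u ^ 2 / 2) * ENNReal.ofReal u *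
            ∫⁻ v in Ioo (0:ℝ) 1, K α u v * ENNReal.ofReal v := by
      rw [← lintegral_const_mul (f := fun v => K α u v * ENNReal.ofReal v) _
        ((K_meas1 α u).mul ENNReal.measurable_ofReal)]
      apply lintegral_congr; intro v
      rw [P]; ring
    rw [e1]
    calc ENNReal.ofReal (f u ^ 2 / 2) * ENNReal.ofReal u *
          ∫⁻ v in Ioo (0:ℝ) 1, K α u v * ENNReal.ofReal v
        ≤ ENNReal.ofReal (f u ^ 2 / 2) * ENNReal.ofReal u *
            ENNReal.ofReal (25/16 * (1 - u ^ 2) ^ (1 - α)) :=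
          mul_le_mul_right (inner_bound α hα0 hα1 hu) _
      _ = ENNReal.ofReal (25/32 * (f u ^ 2 * (1 - u ^ 2) ^ (1 - α) * u)) := by
          rw [← ENNReal.ofReal_mul (by positivity),
            ← ENNReal.ofReal_mul (mul_nonneg (by positivity) hu.1.le)]
          congr 1
          ring
  -- Step 5 : assemble the two halves
  have hfin : Measurable fun u : ℝ =>
      ENNReal.ofReal (f u ^ 2 * (1 - u ^ 2) ^ (1 - α) * u) := by
    apply Measurable.ennreal_ofReal
    exact ((hf.pow_const 2).mul
      ((measurable_const.sub (measurable_id.pow_const 2)).pow measurable_const)).mul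
      measurable_id
  have hb : Measurable fun u : ℝ =>
      ENNReal.ofReal (25/32 * (f u ^ 2 * (1 - u ^ 2) ^ (1 - α) * u)) := by
    apply Measurable.ennreal_ofReal
    exact (((hf.pow_const 2).mul
      ((measurable_const.sub (measurable_id.pow_const 2)).pow measurable_const)).mul
      measurable_id).const_mul _
  have step5 :
      (∫⁻ u in Ioo (0:ℝ) 1, ENNReal.ofReal (25/32 * (f u ^ 2 * (1 - u ^ 2) ^ (1 - α) * u))) +
        (∫⁻ u in Ioo (0:ℝ) 1, ENNReal.ofReal (25/32 * (f u ^ 2 * (1 - u ^ 2) ^ (1 - α) * u)))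
      = ENNReal.ofReal (25/16) *
          ∫⁻ u in Ioo (0:ℝ) 1, ENNReal.ofReal (f u ^ 2 * (1 - u ^ 2) ^ (1 - α) * u) := by
    rw [← lintegral_add_left hb, ← lintegral_const_mul _ hfin]
    apply lintegral_congr_ae
    filter_upwards [ae_restrict_mem measurableSet_Ioo] with u hu
    have hru : (0:ℝ) ≤ 25/32 * (f u ^ 2 * (1 - u ^ 2) ^ (1 - α) * u) := by
      have h1 : (0:ℝ) ≤ (1 - u ^ 2) ^ (1 - α) :=
        Real.rpow_nonneg (by nlinarith [hu.1, hu.2]) _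
      have h2 := hu.1.le
      positivity
    rw [← ENNReal.ofReal_add hru hru, ← ENNReal.ofReal_mul (by norm_num : (0:ℝ) ≤ 25/16)]
    congr 1
    ring
  calc ∫⁻ u in Ioo (0:ℝ) 1, ∫⁻ v in Ioo (0:ℝ) 1,
        ENNReal.ofReal (f u) * ENNReal.ofReal (f v) * K α u v *
          ENNReal.ofReal u * ENNReal.ofReal v
      ≤ ∫⁻ u in Ioo (0:ℝ) 1, ∫⁻ v in Ioo (0:ℝ) 1, (P α f u v + Q α f u v) := step1
    _ = (∫⁻ u in Ioo (0:ℝ) 1, ∫⁻ v in Ioo (0:ℝ) 1, P α f u v) +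
          ∫⁻ u in Ioo (0:ℝ) 1, ∫⁻ v in Ioo (0:ℝ) 1, Q α f u v := step2
    _ = (∫⁻ u in Ioo (0:ℝ) 1, ∫⁻ v in Ioo (0:ℝ) 1, P α f u v) +
          ∫⁻ u in Ioo (0:ℝ) 1, ∫⁻ v in Ioo (0:ℝ) 1, P α f u v := by rw [step3]
    _ ≤ (∫⁻ u in Ioo (0:ℝ) 1,
            ENNReal.ofReal (25/32 * (f u ^ 2 * (1 - u ^ 2) ^ (1 - α) * u))) +
          ∫⁻ u in Ioo (0:ℝ) 1,
            ENNReal.ofReal (25/32 * (f u ^ 2 * (1 - u ^ 2) ^ (1 - α) * u)) :=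
        add_le_add step4 step4
    _ = ENNReal.ofReal (25/16) *
          ∫⁻ u in Ioo (0:ℝ) 1, ENNReal.ofReal (f u ^ 2 * (1 - u ^ 2) ^ (1 - α) * u) := step5
end

section
/- Let 0 < α < 1 and let f : (0,1) → [0,∞) be measurable. Then ∫₀¹ ∫₀¹ f(x) f(y) ( ∫₀^{min{x,y}} s³ (1 − s²)^{−1−α} ds ) x dx · y dy ≤ (4/α²) ∫₀¹ f(x)² (1 − x²)^{1−α} x dx. -/
open MeasureTheory Real Set

noncomputable section Stmt8Aux

open scoped ENNReal

private lemma measurable_ind :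
    Measurable fun p : ℝ × ℝ => (Ioo (0:ℝ) p.1).indicator (1 : ℝ → ℝ≥0∞) p.2 := by
  have h : (fun p : ℝ × ℝ => (Ioo (0:ℝ) p.1).indicator (1 : ℝ → ℝ≥0∞) p.2)
      = {p : ℝ × ℝ | 0 < p.2 ∧ p.2 < p.1}.indicator (fun _ => (1:ℝ≥0∞)) := by
    funext p
    by_cases h : 0 < p.2 ∧ p.2 < p.1 <;>
      simp [Set.indicator_apply, Set.mem_Ioo, Set.mem_setOf_eq, h]
  rw [h]
  exact measurable_const.indicator
    ((measurableSet_lt measurable_const measurable_snd).inter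
      (measurableSet_lt measurable_snd measurable_fst))

private lemma hBs (g : ℝ → ℝ≥0∞) (hg : Measurable g) {s : ℝ} (hs : s ∈ Ioo (0:ℝ) 1) :
    ∫⁻ y in Ioo (0:ℝ) 1, g y * (Ioo (0:ℝ) y).indicator 1 s = ∫⁻ y in Ioo s 1, g y := by
  have h1 : ∀ y, g y * (Ioo (0:ℝ) y).indicator 1 s = (Ioi s).indicator g y := by
    intro y
    by_cases hy : s < y <;>
      simp [Set.indicator_apply, Set.mem_Ioo, Set.mem_Ioi, hy, hs.1]
  calc ∫⁻ y in Ioo (0:ℝ) 1, g y * (Ioo (0:ℝ) y).indicator 1 s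
      = ∫⁻ y in Ioo (0:ℝ) 1, (Ioi s).indicator g y := by
        exact lintegral_congr fun y => h1 y
    _ = ∫⁻ y in Ioi s ∩ Ioo (0:ℝ) 1, g y := by
        rw [lintegral_indicator measurableSet_Ioi, Measure.restrict_restrict measurableSet_Ioi]
    _ = ∫⁻ y in Ioo s 1, g y := by
        rw [Set.Ioi_inter_Ioo, max_eq_left hs.1.le]

private lemma swap_min (g k : ℝ → ℝ≥0∞) (hg : Measurable g) (hk : Measurable k) :
    ∫⁻ x in Ioo (0:ℝ) 1, ∫⁻ y in Ioo (0:ℝ) 1, g x * g y * ∫⁻ s in Ioo 0 (min x y), k s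
      = ∫⁻ s in Ioo (0:ℝ) 1,
          k s * (∫⁻ x in Ioo s 1, g x) * (∫⁻ y in Ioo s 1, g y) := by
  have mI : ∀ a : ℝ, Measurable ((Ioo (0:ℝ) a).indicator (1 : ℝ → ℝ≥0∞)) := fun a =>
    measurable_const.indicator measurableSet_Ioo
  have mIy : ∀ s : ℝ, Measurable fun y : ℝ => (Ioo (0:ℝ) y).indicator (1 : ℝ → ℝ≥0∞) s :=
    fun s => measurable_ind.comp (measurable_id.prodMk measurable_const)
  have hind : ∀ x ∈ Ioo (0:ℝ) 1, ∀ y ∈ Ioo (0:ℝ) 1,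
      g x * g y * ∫⁻ s in Ioo 0 (min x y), k s
        = ∫⁻ s in Ioo (0:ℝ) 1, g x * (Ioo (0:ℝ) x).indicator 1 s *
            (g y * (Ioo (0:ℝ) y).indicator 1 s * k s) := by
    intro x hx y hy
    have hset : Ioo (0:ℝ) x ∩ Ioo (0:ℝ) y = Ioo (0:ℝ) (min x y) := by
      rw [Set.Ioo_inter_Ioo]; simp
    have hpt : ∀ s, (Ioo (0:ℝ) x).indicator (1 : ℝ → ℝ≥0∞) s *
        (Ioo (0:ℝ) y).indicator 1 s * k s = (Ioo (0:ℝ) (min x y)).indicator k s := by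
      intro s
      rw [← hset]
      by_cases hx' : s ∈ Ioo (0:ℝ) x <;> by_cases hy' : s ∈ Ioo (0:ℝ) y <;>
        simp [Set.indicator_apply, Set.mem_inter_iff, hx', hy']
    have h1 : ∫⁻ s in Ioo 0 (min x y), k s
        = ∫⁻ s in Ioo (0:ℝ) 1, (Ioo (0:ℝ) x).indicator 1 s *
            ((Ioo (0:ℝ) y).indicator 1 s) * k s := by
      rw [lintegral_congr hpt, lintegral_indicator measurableSet_Ioo,
        Measure.restrict_restrict measurableSet_Ioo,
        Set.inter_eq_left.mpr (Ioo_subset_Ioo le_rfl (min_le_of_left_le hx.2.le))]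
    rw [h1, ← lintegral_const_mul (g x * g y) (f := fun s => (Ioo (0:ℝ) x).indicator (1 : ℝ → ℝ≥0∞) s * (Ioo (0:ℝ) y).indicator (1 : ℝ → ℝ≥0∞) s * k s) (((mI x).mul (mI y)).mul hk)]
    exact lintegral_congr fun s => by ring
  calc ∫⁻ x in Ioo (0:ℝ) 1, ∫⁻ y in Ioo (0:ℝ) 1, g x * g y * ∫⁻ s in Ioo 0 (min x y), k s
      = ∫⁻ x in Ioo (0:ℝ) 1, ∫⁻ y in Ioo (0:ℝ) 1, ∫⁻ s in Ioo (0:ℝ) 1,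
          g x * (Ioo (0:ℝ) x).indicator 1 s * (g y * (Ioo (0:ℝ) y).indicator 1 s * k s) := by
        refine setLIntegral_congr_fun_ae measurableSet_Ioo (ae_of_all _ fun x hx => ?_)
        exact setLIntegral_congr_fun_ae measurableSet_Ioo (ae_of_all _ fun y hy => hind x hx y hy)
    _ = ∫⁻ x in Ioo (0:ℝ) 1, ∫⁻ s in Ioo (0:ℝ) 1, ∫⁻ y in Ioo (0:ℝ) 1,
          g x * (Ioo (0:ℝ) x).indicator 1 s * (g y * (Ioo (0:ℝ) y).indicator 1 s * k s) := by
        refine setLIntegral_congr_fun_ae measurableSet_Ioo (ae_of_all _ fun x hx => ?_)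
        refine lintegral_lintegral_swap ?_
        apply Measurable.aemeasurable
        rw [Function.uncurry_def]
        exact (measurable_const.mul (((mI x).comp measurable_snd)))|>.mul
          (((hg.comp measurable_fst).mul measurable_ind).mul (hk.comp measurable_snd))
    _ = ∫⁻ x in Ioo (0:ℝ) 1, ∫⁻ s in Ioo (0:ℝ) 1,
          g x * (Ioo (0:ℝ) x).indicator 1 s * (k s * ∫⁻ y in Ioo s 1, g y) := by
        refine setLIntegral_congr_fun_ae measurableSet_Ioo (ae_of_all _ fun x hx => ?_)
        refine setLIntegral_congr_fun_ae measurableSet_Ioo (ae_of_all _ fun s hs => ?_)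
        rw [lintegral_const_mul _ (f := fun y => g y * (Ioo (0:ℝ) y).indicator (1 : ℝ → ℝ≥0∞) s * k s) ((hg.mul (mIy s)).mul (measurable_const))]
        congr 1
        rw [lintegral_mul_const _ (f := fun y => g y * (Ioo (0:ℝ) y).indicator (1 : ℝ → ℝ≥0∞) s) (hg.mul (mIy s)), hBs g hg hs, mul_comm]
    _ = ∫⁻ s in Ioo (0:ℝ) 1, ∫⁻ x in Ioo (0:ℝ) 1,
          g x * (Ioo (0:ℝ) x).indicator 1 s * (k s * ∫⁻ y in Ioo s 1, g y) := by
        refine lintegral_lintegral_swap ?_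
        apply Measurable.aemeasurable
        rw [Function.uncurry_def]
        have hG : Measurable fun s : ℝ => ∫⁻ y in Ioo s 1, g y := by
          refine Antitone.measurable fun s s' hss' => ?_
          exact lintegral_mono' (Measure.restrict_mono (Ioo_subset_Ioo hss' le_rfl) le_rfl) le_rfl
        exact ((hg.comp measurable_fst).mul measurable_ind).mul
          ((hk.comp measurable_snd).mul (hG.comp measurable_snd))
    _ = ∫⁻ s in Ioo (0:ℝ) 1, k s * (∫⁻ x in Ioo s 1, g x) * (∫⁻ y in Ioo s 1, g y) := by
        refine setLIntegral_congr_fun_ae measurableSet_Ioo (ae_of_all _ fun s hs => ?_)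
        rw [lintegral_mul_const _ (f := fun y => g y * (Ioo (0:ℝ) y).indicator (1 : ℝ → ℝ≥0∞) s) (hg.mul (mIy s)), hBs g hg hs]
        ring

private lemma swap2 (c u : ℝ → ℝ≥0∞) (hc : Measurable c) (hu : Measurable u) :
    ∫⁻ s in Ioo (0:ℝ) 1, c s * ∫⁻ x in Ioo s 1, u x
      = ∫⁻ x in Ioo (0:ℝ) 1, u x * ∫⁻ s in Ioo 0 x, c s := by
  have mIy : ∀ s : ℝ, Measurable fun y : ℝ => (Ioo (0:ℝ) y).indicator (1 : ℝ → ℝ≥0∞) s :=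
    fun s => measurable_ind.comp (measurable_id.prodMk measurable_const)
  calc ∫⁻ s in Ioo (0:ℝ) 1, c s * ∫⁻ x in Ioo s 1, u x
      = ∫⁻ s in Ioo (0:ℝ) 1, ∫⁻ x in Ioo (0:ℝ) 1,
          c s * (u x * (Ioo (0:ℝ) x).indicator 1 s) := by
        refine setLIntegral_congr_fun_ae measurableSet_Ioo (ae_of_all _ fun s hs => ?_)
        rw [← hBs u hu hs, ← lintegral_const_mul _ (f := fun y => u y * (Ioo (0:ℝ) y).indicator (1 : ℝ → ℝ≥0∞) s) (hu.mul (mIy s))]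
    _ = ∫⁻ x in Ioo (0:ℝ) 1, ∫⁻ s in Ioo (0:ℝ) 1,
          c s * (u x * (Ioo (0:ℝ) x).indicator 1 s) := by
        refine lintegral_lintegral_swap ?_
        apply Measurable.aemeasurable
        rw [Function.uncurry_def]
        exact (hc.comp measurable_fst).mul ((hu.comp measurable_snd).mul
          (measurable_ind.comp (measurable_snd.prodMk measurable_fst)))
    _ = ∫⁻ x in Ioo (0:ℝ) 1, u x * ∫⁻ s in Ioo 0 x, c s := by
        refine setLIntegral_congr_fun_ae measurableSet_Ioo (ae_of_all _ fun x hx => ?_)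
        have h1 : ∀ s, c s * (u x * (Ioo (0:ℝ) x).indicator 1 s)
            = u x * ((Ioo (0:ℝ) x).indicator c s) := by
          intro s
          by_cases hsx : s ∈ Ioo (0:ℝ) x
          · rw [Set.indicator_of_mem hsx, Set.indicator_of_mem hsx]; simp [mul_comm]
          · rw [Set.indicator_of_notMem hsx, Set.indicator_of_notMem hsx]; simp
        rw [lintegral_congr h1, lintegral_const_mul _ (hc.indicator measurableSet_Ioo)]
        congr 1
        rw [lintegral_indicator measurableSet_Ioo, Measure.restrict_restrict measurableSet_Ioo,
          Set.inter_eq_left.mpr (Ioo_subset_Ioo le_rfl hx.2.le)]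

private lemma lintegral_sq_le {μ : Measure ℝ} (a b : ℝ → ℝ≥0∞)
    (ha : AEMeasurable a μ) (hb : AEMeasurable b μ) :
    (∫⁻ x, a x * b x ∂μ) * (∫⁻ x, a x * b x ∂μ)
      ≤ (∫⁻ x, (a x) ^ 2 ∂μ) * (∫⁻ x, (b x) ^ 2 ∂μ) := by
  have hpq : Real.HolderConjugate 2 2 := Real.HolderConjugate.two_two
  have h := ENNReal.lintegral_mul_le_Lp_mul_Lq μ hpq ha hb
  simp only [Pi.mul_apply] at h
  calc (∫⁻ x, a x * b x ∂μ) * (∫⁻ x, a x * b x ∂μ)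
      ≤ ((∫⁻ x, a x ^ (2:ℝ) ∂μ) ^ (1/(2:ℝ)) * (∫⁻ x, b x ^ (2:ℝ) ∂μ) ^ (1/(2:ℝ))) *
        ((∫⁻ x, a x ^ (2:ℝ) ∂μ) ^ (1/(2:ℝ)) * (∫⁻ x, b x ^ (2:ℝ) ∂μ) ^ (1/(2:ℝ))) :=
        mul_le_mul' h h
    _ = (∫⁻ x, (a x) ^ 2 ∂μ) * (∫⁻ x, (b x) ^ 2 ∂μ) := by
        have e : ∀ c : ℝ → ℝ≥0∞, (∫⁻ x, c x ^ (2:ℝ) ∂μ) = ∫⁻ x, c x ^ 2 ∂μ := fun c =>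
          lintegral_congr fun x => by rw [← ENNReal.rpow_natCast]; norm_num
        rw [mul_mul_mul_comm, ← ENNReal.rpow_add_of_nonneg _ _ (by norm_num) (by norm_num),
          ← ENNReal.rpow_add_of_nonneg _ _ (by norm_num) (by norm_num),
          show (1/(2:ℝ)) + 1/2 = 1 by norm_num, ENNReal.rpow_one, ENNReal.rpow_one, e a, e b]

private lemma aux1 {β : ℝ} (hβ0 : 0 < β) (hβ1 : β < 1) {s : ℝ} (hs0 : 0 ≤ s) (hs1 : s < 1) :
    ∫⁻ x in Ioo s 1, ENNReal.ofReal ((1 - x) ^ (β - 1))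
      = ENNReal.ofReal ((1 - s) ^ β / β) := by
  have hint : IntervalIntegrable (fun t : ℝ => t ^ (β - 1)) volume 0 (1 - s) :=
    intervalIntegral.intervalIntegrable_rpow' (by linarith)
  have hint2 : IntervalIntegrable (fun x : ℝ => (1 - x) ^ (β - 1)) volume s 1 := by
    simpa using (hint.comp_sub_left 1).symm
  have hIOO : IntegrableOn (fun x : ℝ => (1 - x) ^ (β - 1)) (Ioo s 1) :=
    (intervalIntegrable_iff_integrableOn_Ioo_of_le hs1.le).mp hint2
  have hval : ∫ x in Ioo s 1, (1 - x) ^ (β - 1) = (1 - s) ^ β / β := by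
    rw [← MeasureTheory.integral_Ioc_eq_integral_Ioo, ← intervalIntegral.integral_of_le hs1.le,
      intervalIntegral.integral_comp_sub_left (fun t : ℝ => t ^ (β - 1)) 1]
    rw [show (1:ℝ) - 1 = 0 by ring]
    rw [integral_rpow (Or.inl (by linarith))]
    rw [show β - 1 + 1 = β by ring, Real.zero_rpow hβ0.ne']
    ring
  rw [← ofReal_integral_eq_lintegral_ofReal hIOO ?_, hval]
  · filter_upwards [ae_restrict_mem measurableSet_Ioo] with x hx
    exact Real.rpow_nonneg (by linarith [hx.2]) _
  
private lemma aux2 {β : ℝ} (hβ0 : 0 < β) {x : ℝ} (hx0 : 0 ≤ x) (hx1 : x < 1) :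
    ∫⁻ s in Ioo 0 x, ENNReal.ofReal (s * (1 - s ^ 2) ^ (-1 - β))
      ≤ ENNReal.ofReal ((1 - x ^ 2) ^ (-β) / (2 * β)) := by
  have hpos : ∀ t ∈ uIcc (0:ℝ) x, (0:ℝ) < 1 - t ^ 2 := by
    intro t ht
    rw [uIcc_of_le hx0] at ht
    nlinarith [ht.1, ht.2]
  have hderiv : ∀ t ∈ uIcc (0:ℝ) x,
      HasDerivAt (fun s : ℝ => (1 - s ^ 2) ^ (-β) / (2 * β)) (t * (1 - t ^ 2) ^ (-1 - β)) t := by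
    intro t ht
    have h1 := hpos t ht
    have hd1 : HasDerivAt (fun s : ℝ => 1 - s ^ 2) (-(2 * t)) t := by
      simpa using (hasDerivAt_pow 2 t).const_sub 1
    have hd2 := (hd1.rpow_const (p := -β) (Or.inl h1.ne')).div_const (2 * β)
    refine hd2.congr_deriv ?_
    rw [show -β - 1 = -1 - β by ring]
    field_simp
  have hcont : ContinuousOn (fun t : ℝ => t * (1 - t ^ 2) ^ (-1 - β)) (uIcc (0:ℝ) x) := by
    refine continuousOn_id.mul (ContinuousOn.rpow_const ?_ fun t ht => Or.inl (hpos t ht).ne') 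
    exact (continuousOn_const.sub (continuousOn_id.pow 2))
  have hii : IntervalIntegrable (fun t : ℝ => t * (1 - t ^ 2) ^ (-1 - β)) volume 0 x :=
    hcont.intervalIntegrable
  have hval : ∫ t in (0:ℝ)..x, t * (1 - t ^ 2) ^ (-1 - β)
      = (1 - x ^ 2) ^ (-β) / (2 * β) - (1 - 0 ^ 2) ^ (-β) / (2 * β) :=
    intervalIntegral.integral_eq_sub_of_hasDerivAt hderiv hii
  have hIOO : IntegrableOn (fun t : ℝ => t * (1 - t ^ 2) ^ (-1 - β)) (Ioo 0 x) :=
    (intervalIntegrable_iff_integrableOn_Ioo_of_le hx0).mp hii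
  rw [← ofReal_integral_eq_lintegral_ofReal hIOO ?_]
  · apply ENNReal.ofReal_le_ofReal
    have : ∫ s in Ioo 0 x, s * (1 - s ^ 2) ^ (-1 - β)
        = (1 - x ^ 2) ^ (-β) / (2 * β) - (1 - 0 ^ 2) ^ (-β) / (2 * β) := by
      rw [← MeasureTheory.integral_Ioc_eq_integral_Ioo, ← intervalIntegral.integral_of_le hx0]
      exact hval
    rw [this]
    have h2 : (0:ℝ) ≤ (1 - 0 ^ 2) ^ (-β) / (2 * β) := by positivity
    linarith
  · filter_upwards [ae_restrict_mem measurableSet_Ioo] with t ht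
    have h1 : (0:ℝ) < 1 - t ^ 2 := by nlinarith [ht.1, ht.2]
    exact mul_nonneg ht.1.le (Real.rpow_nonneg h1.le _)

end Stmt8Aux

private lemma sq_rpow_half (x p : ℝ) (hx : 0 ≤ x) : (x ^ (p / 2)) ^ 2 = x ^ p := by
  rw [← Real.rpow_natCast (x ^ (p / 2)) 2, ← Real.rpow_mul hx]
  norm_num

theorem stmt8 (α : ℝ) (hα0 : 0 < α) (hα1 : α < 1) (f : ℝ → ℝ)
    (hf : Measurable f) (hf0 : ∀ x ∈ Ioo (0:ℝ) 1, 0 ≤ f x) :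
    ∫⁻ x in Ioo (0:ℝ) 1, ∫⁻ y in Ioo (0:ℝ) 1,
        ENNReal.ofReal (f x) * ENNReal.ofReal (f y) *
          (∫⁻ s in Ioo (0:ℝ) (min x y), ENNReal.ofReal (s^3 * (1 - s^2) ^ (-1 - α))) *
          ENNReal.ofReal x * ENNReal.ofReal y
      ≤ ENNReal.ofReal (4 / α^2) *
        ∫⁻ x in Ioo (0:ℝ) 1, ENNReal.ofReal (f x ^ 2 * (1 - x^2) ^ (1 - α) * x) := by
  have hβ0 : 0 < α / 2 := by linarith
  have hβ1 : α / 2 < 1 := by linarith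
  have hg : Measurable fun x : ℝ => ENNReal.ofReal (f x) * ENNReal.ofReal x :=
    hf.ennreal_ofReal.mul measurable_id.ennreal_ofReal
  have hk : Measurable fun s : ℝ => ENNReal.ofReal (s^3 * (1 - s^2) ^ (-1 - α)) :=
    Measurable.ennreal_ofReal (by fun_prop)
  have hu : Measurable fun x : ℝ => ENNReal.ofReal (f x ^ 2 * (1 - x^2) ^ (1 - α/2) * x) :=
    Measurable.ennreal_ofReal (by fun_prop)
  have hkC : Measurable fun s : ℝ => ENNReal.ofReal (s^3 * (1 - s^2) ^ (-1 - α)) *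
      ENNReal.ofReal ((1 - s) ^ (α/2) / (α/2)) :=
    hk.mul (Measurable.ennreal_ofReal (by fun_prop))
  -- Step B : Cauchy-Schwarz bound for each s
  have key : ∀ s ∈ Ioo (0:ℝ) 1,
      ENNReal.ofReal (s^3 * (1 - s^2) ^ (-1 - α)) *
          (∫⁻ x in Ioo s 1, ENNReal.ofReal (f x) * ENNReal.ofReal x) *
          (∫⁻ y in Ioo s 1, ENNReal.ofReal (f y) * ENNReal.ofReal y)
        ≤ (ENNReal.ofReal (s^3 * (1 - s^2) ^ (-1 - α)) *
            ENNReal.ofReal ((1 - s) ^ (α/2) / (α/2))) *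
          ∫⁻ x in Ioo s 1, ENNReal.ofReal (f x ^ 2 * (1 - x^2) ^ (1 - α/2) * x) := by
    intro s hs
    have hfacts : ∀ x ∈ Ioo s 1, 0 < x ∧ x < 1 ∧ (0:ℝ) < 1 - x^2 ∧ 0 ≤ f x := by
      intro x hx
      have h1 : 0 < x := hs.1.trans hx.1
      have h2 : x < 1 := hx.2
      exact ⟨h1, h2, by nlinarith, hf0 x ⟨h1, h2⟩⟩
    have hab : ∀ x ∈ Ioo s 1,
        ENNReal.ofReal (f x) * ENNReal.ofReal x
          = ENNReal.ofReal (f x * ((1 - x^2) ^ ((1 - α/2)/2) * x ^ ((1:ℝ)/2))) *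
            ENNReal.ofReal ((1 - x^2) ^ ((α/2 - 1)/2) * x ^ ((1:ℝ)/2)) := by
      intro x hx
      obtain ⟨h1, h2, h3, h4⟩ := hfacts x hx
      rw [← ENNReal.ofReal_mul h4, ← ENNReal.ofReal_mul
        (mul_nonneg h4 (mul_nonneg (Real.rpow_nonneg h3.le _) (Real.rpow_nonneg h1.le _)))]
      congr 1
      rw [show f x * ((1 - x^2) ^ ((1 - α/2)/2) * x ^ ((1:ℝ)/2)) *
            ((1 - x^2) ^ ((α/2 - 1)/2) * x ^ ((1:ℝ)/2))
          = f x * ((1 - x^2) ^ ((1 - α/2)/2) * (1 - x^2) ^ ((α/2 - 1)/2)) *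
            (x ^ ((1:ℝ)/2) * x ^ ((1:ℝ)/2)) by ring,
        ← Real.rpow_add h3, ← Real.rpow_add h1,
        show (1 - α/2)/2 + (α/2 - 1)/2 = 0 by ring,
        show (1:ℝ)/2 + 1/2 = 1 by norm_num, Real.rpow_zero, Real.rpow_one]
      ring
    have ha2 : ∀ x ∈ Ioo s 1,
        (ENNReal.ofReal (f x * ((1 - x^2) ^ ((1 - α/2)/2) * x ^ ((1:ℝ)/2)))) ^ 2
          = ENNReal.ofReal (f x ^ 2 * (1 - x^2) ^ (1 - α/2) * x) := by
      intro x hx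
      obtain ⟨h1, h2, h3, h4⟩ := hfacts x hx
      rw [← ENNReal.ofReal_pow
        (mul_nonneg h4 (mul_nonneg (Real.rpow_nonneg h3.le _) (Real.rpow_nonneg h1.le _)))]
      congr 1
      rw [show (f x * ((1 - x^2) ^ ((1 - α/2)/2) * x ^ ((1:ℝ)/2))) ^ 2
          = f x ^ 2 * (((1 - x^2) ^ ((1 - α/2)/2)) ^ 2 * (x ^ ((1:ℝ)/2)) ^ 2) by ring,
        sq_rpow_half _ _ h3.le, show ((1:ℝ)/2) = 1/2 by norm_num,
        sq_rpow_half x 1 h1.le, Real.rpow_one]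
      ring
    have hb2 : ∀ x ∈ Ioo s 1,
        (ENNReal.ofReal ((1 - x^2) ^ ((α/2 - 1)/2) * x ^ ((1:ℝ)/2))) ^ 2
          = ENNReal.ofReal ((1 - x^2) ^ (α/2 - 1) * x) := by
      intro x hx
      obtain ⟨h1, h2, h3, h4⟩ := hfacts x hx
      rw [← ENNReal.ofReal_pow
        (mul_nonneg (Real.rpow_nonneg h3.le _) (Real.rpow_nonneg h1.le _))]
      congr 1
      rw [show ((1 - x^2) ^ ((α/2 - 1)/2) * x ^ ((1:ℝ)/2)) ^ 2
          = ((1 - x^2) ^ ((α/2 - 1)/2)) ^ 2 * (x ^ ((1:ℝ)/2)) ^ 2 by ring,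
        sq_rpow_half _ _ h3.le, show ((1:ℝ)/2) = 1/2 by norm_num,
        sq_rpow_half x 1 h1.le, Real.rpow_one]
    have hCS := lintegral_sq_le (μ := volume.restrict (Ioo s 1))
      (fun x => ENNReal.ofReal (f x * ((1 - x^2) ^ ((1 - α/2)/2) * x ^ ((1:ℝ)/2))))
      (fun x => ENNReal.ofReal ((1 - x^2) ^ ((α/2 - 1)/2) * x ^ ((1:ℝ)/2)))
      (Measurable.ennreal_ofReal (by fun_prop)).aemeasurable
      (Measurable.ennreal_ofReal (by fun_prop)).aemeasurable
    have hG2 : (∫⁻ x in Ioo s 1, ENNReal.ofReal (f x) * ENNReal.ofReal x) *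
          (∫⁻ y in Ioo s 1, ENNReal.ofReal (f y) * ENNReal.ofReal y)
        ≤ (∫⁻ x in Ioo s 1, ENNReal.ofReal (f x ^ 2 * (1 - x^2) ^ (1 - α/2) * x)) *
          (∫⁻ x in Ioo s 1, ENNReal.ofReal ((1 - x^2) ^ (α/2 - 1) * x)) := by
      rw [setLIntegral_congr_fun_ae measurableSet_Ioo (ae_of_all _ hab),
        ← setLIntegral_congr_fun_ae measurableSet_Ioo (ae_of_all _ ha2),
        ← setLIntegral_congr_fun_ae measurableSet_Ioo (ae_of_all _ hb2)]
      exact hCS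
    have hbint : ∫⁻ x in Ioo s 1, ENNReal.ofReal ((1 - x^2) ^ (α/2 - 1) * x)
        ≤ ENNReal.ofReal ((1 - s) ^ (α/2) / (α/2)) := by
      have hmono : ∫⁻ x in Ioo s 1, ENNReal.ofReal ((1 - x^2) ^ (α/2 - 1) * x)
          ≤ ∫⁻ x in Ioo s 1, ENNReal.ofReal ((1 - x) ^ (α/2 - 1)) := by
        refine lintegral_mono_ae ((ae_restrict_iff' measurableSet_Ioo).mpr
          (ae_of_all _ fun x hx => ?_))
        obtain ⟨h1, h2, h3, _⟩ := hfacts x hx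
        apply ENNReal.ofReal_le_ofReal
        calc (1 - x^2) ^ (α/2 - 1) * x ≤ (1 - x^2) ^ (α/2 - 1) * 1 := by
              exact mul_le_mul_of_nonneg_left h2.le (Real.rpow_nonneg h3.le _)
          _ = (1 - x^2) ^ (α/2 - 1) := mul_one _
          _ ≤ (1 - x) ^ (α/2 - 1) := by
              apply Real.rpow_le_rpow_of_nonpos (by linarith) (by nlinarith) (by linarith)
      exact hmono.trans_eq (aux1 hβ0 hβ1 hs.1.le hs.2)
    calc ENNReal.ofReal (s^3 * (1 - s^2) ^ (-1 - α)) *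
          (∫⁻ x in Ioo s 1, ENNReal.ofReal (f x) * ENNReal.ofReal x) *
          (∫⁻ y in Ioo s 1, ENNReal.ofReal (f y) * ENNReal.ofReal y)
        = ENNReal.ofReal (s^3 * (1 - s^2) ^ (-1 - α)) *
          ((∫⁻ x in Ioo s 1, ENNReal.ofReal (f x) * ENNReal.ofReal x) *
           (∫⁻ y in Ioo s 1, ENNReal.ofReal (f y) * ENNReal.ofReal y)) := by ring
      _ ≤ ENNReal.ofReal (s^3 * (1 - s^2) ^ (-1 - α)) *
          ((∫⁻ x in Ioo s 1, ENNReal.ofReal (f x ^ 2 * (1 - x^2) ^ (1 - α/2) * x)) *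
           (∫⁻ x in Ioo s 1, ENNReal.ofReal ((1 - x^2) ^ (α/2 - 1) * x))) :=
          mul_le_mul_right hG2 _
      _ ≤ ENNReal.ofReal (s^3 * (1 - s^2) ^ (-1 - α)) *
          ((∫⁻ x in Ioo s 1, ENNReal.ofReal (f x ^ 2 * (1 - x^2) ^ (1 - α/2) * x)) *
           ENNReal.ofReal ((1 - s) ^ (α/2) / (α/2))) :=
          mul_le_mul_right (mul_le_mul_right hbint _) _
      _ = (ENNReal.ofReal (s^3 * (1 - s^2) ^ (-1 - α)) *
            ENNReal.ofReal ((1 - s) ^ (α/2) / (α/2))) *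
          ∫⁻ x in Ioo s 1, ENNReal.ofReal (f x ^ 2 * (1 - x^2) ^ (1 - α/2) * x) := by ring
  -- Step E : pointwise bound after the second swap
  have keyE : ∀ x ∈ Ioo (0:ℝ) 1,
      ENNReal.ofReal (f x ^ 2 * (1 - x^2) ^ (1 - α/2) * x) *
          (∫⁻ s in Ioo 0 x, ENNReal.ofReal (s^3 * (1 - s^2) ^ (-1 - α)) *
            ENNReal.ofReal ((1 - s) ^ (α/2) / (α/2)))
        ≤ ENNReal.ofReal (4 / α^2) * ENNReal.ofReal (f x ^ 2 * (1 - x^2) ^ (1 - α) * x) := by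
    intro x hx
    have h2x : (0:ℝ) < 1 - x^2 := by nlinarith [hx.1, hx.2]
    have hstep1 : ∀ s ∈ Ioo (0:ℝ) x,
        ENNReal.ofReal (s^3 * (1 - s^2) ^ (-1 - α)) *
            ENNReal.ofReal ((1 - s) ^ (α/2) / (α/2))
          ≤ ENNReal.ofReal (1/(α/2)) * ENNReal.ofReal (s * (1 - s^2) ^ (-1 - α/2)) := by
      intro s hs
      have hs0 := hs.1
      have hs1 : s < 1 := hs.2.trans hx.2
      have h2s : (0:ℝ) < 1 - s^2 := by nlinarith
      rw [← ENNReal.ofReal_mul (by positivity), ← ENNReal.ofReal_mul (by positivity)]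
      apply ENNReal.ofReal_le_ofReal
      have e1 : s^3 ≤ s := by nlinarith
      have e2 : (1 - s) ^ (α/2) ≤ (1 - s^2) ^ (α/2) :=
        Real.rpow_le_rpow (by linarith) (by nlinarith) (by linarith)
      calc s^3 * (1 - s^2) ^ (-1 - α) * ((1 - s) ^ (α/2) / (α/2))
          = (1/(α/2)) * (s^3 * ((1 - s^2) ^ (-1 - α) * (1 - s) ^ (α/2))) := by ring
        _ ≤ (1/(α/2)) * (s * ((1 - s^2) ^ (-1 - α) * (1 - s^2) ^ (α/2))) := by
            apply mul_le_mul_of_nonneg_left ?_ (by positivity)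
            apply mul_le_mul e1 (mul_le_mul_of_nonneg_left e2 (Real.rpow_nonneg h2s.le _))
              (mul_nonneg (Real.rpow_nonneg h2s.le _) (Real.rpow_nonneg (by linarith) _))
              (by linarith)
        _ = (1/(α/2)) * (s * (1 - s^2) ^ (-1 - α/2)) := by
            rw [← Real.rpow_add h2s, show -1 - α + α/2 = -1 - α/2 by ring]
    have hstep : ∫⁻ s in Ioo 0 x, ENNReal.ofReal (s^3 * (1 - s^2) ^ (-1 - α)) *
          ENNReal.ofReal ((1 - s) ^ (α/2) / (α/2))
        ≤ ENNReal.ofReal (1/(α/2) * ((1 - x^2) ^ (-(α/2)) / (2 * (α/2)))) := by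
      calc ∫⁻ s in Ioo 0 x, ENNReal.ofReal (s^3 * (1 - s^2) ^ (-1 - α)) *
            ENNReal.ofReal ((1 - s) ^ (α/2) / (α/2))
          ≤ ∫⁻ s in Ioo 0 x, ENNReal.ofReal (1/(α/2)) *
              ENNReal.ofReal (s * (1 - s^2) ^ (-1 - α/2)) :=
            lintegral_mono_ae ((ae_restrict_iff' measurableSet_Ioo).mpr (ae_of_all _ hstep1))
        _ = ENNReal.ofReal (1/(α/2)) *
              ∫⁻ s in Ioo 0 x, ENNReal.ofReal (s * (1 - s^2) ^ (-1 - α/2)) :=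
            lintegral_const_mul _ (Measurable.ennreal_ofReal (by fun_prop))
        _ ≤ ENNReal.ofReal (1/(α/2)) *
              ENNReal.ofReal ((1 - x^2) ^ (-(α/2)) / (2 * (α/2))) :=
            mul_le_mul_right (aux2 hβ0 hx.1.le hx.2) _
        _ = ENNReal.ofReal (1/(α/2) * ((1 - x^2) ^ (-(α/2)) / (2 * (α/2)))) :=
            (ENNReal.ofReal_mul (by positivity)).symm
    calc ENNReal.ofReal (f x ^ 2 * (1 - x^2) ^ (1 - α/2) * x) *
          (∫⁻ s in Ioo 0 x, ENNReal.ofReal (s^3 * (1 - s^2) ^ (-1 - α)) *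
            ENNReal.ofReal ((1 - s) ^ (α/2) / (α/2)))
        ≤ ENNReal.ofReal (f x ^ 2 * (1 - x^2) ^ (1 - α/2) * x) *
            ENNReal.ofReal (1/(α/2) * ((1 - x^2) ^ (-(α/2)) / (2 * (α/2)))) :=
          mul_le_mul_right hstep _
      _ = ENNReal.ofReal (f x ^ 2 * (1 - x^2) ^ (1 - α/2) * x *
            (1/(α/2) * ((1 - x^2) ^ (-(α/2)) / (2 * (α/2))))) :=
          (ENNReal.ofReal_mul (mul_nonneg (mul_nonneg (sq_nonneg _)
            (Real.rpow_nonneg h2x.le _)) hx.1.le)).symm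
      _ ≤ ENNReal.ofReal (4/α^2 * (f x ^ 2 * (1 - x^2) ^ (1 - α) * x)) := by
          apply ENNReal.ofReal_le_ofReal
          have hrw : (1 - x^2) ^ (1 - α/2) * (1 - x^2) ^ (-(α/2)) = (1 - x^2) ^ (1 - α) := by
            rw [← Real.rpow_add h2x, show 1 - α/2 + -(α/2) = 1 - α by ring]
          calc f x ^ 2 * (1 - x^2) ^ (1 - α/2) * x *
                (1/(α/2) * ((1 - x^2) ^ (-(α/2)) / (2 * (α/2))))
              = 2/α^2 * (f x ^ 2 * ((1 - x^2) ^ (1 - α/2) * (1 - x^2) ^ (-(α/2))) * x) := by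
                field_simp
            _ = 2/α^2 * (f x ^ 2 * (1 - x^2) ^ (1 - α) * x) := by rw [hrw]
            _ ≤ 4/α^2 * (f x ^ 2 * (1 - x^2) ^ (1 - α) * x) := by
                apply mul_le_mul_of_nonneg_right ?_
                  (mul_nonneg (mul_nonneg (sq_nonneg _) (Real.rpow_nonneg h2x.le _)) hx.1.le)
                gcongr
                norm_num
      _ = ENNReal.ofReal (4/α^2) * ENNReal.ofReal (f x ^ 2 * (1 - x^2) ^ (1 - α) * x) :=
          ENNReal.ofReal_mul (by positivity)
  -- Main chain
  calc ∫⁻ x in Ioo (0:ℝ) 1, ∫⁻ y in Ioo (0:ℝ) 1,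
        ENNReal.ofReal (f x) * ENNReal.ofReal (f y) *
          (∫⁻ s in Ioo (0:ℝ) (min x y), ENNReal.ofReal (s^3 * (1 - s^2) ^ (-1 - α))) *
          ENNReal.ofReal x * ENNReal.ofReal y
      = ∫⁻ x in Ioo (0:ℝ) 1, ∫⁻ y in Ioo (0:ℝ) 1,
          (ENNReal.ofReal (f x) * ENNReal.ofReal x) * (ENNReal.ofReal (f y) * ENNReal.ofReal y) *
          ∫⁻ s in Ioo (0:ℝ) (min x y), ENNReal.ofReal (s^3 * (1 - s^2) ^ (-1 - α)) := by
        refine setLIntegral_congr_fun_ae measurableSet_Ioo (ae_of_all _ fun x hx => ?_)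
        refine setLIntegral_congr_fun_ae measurableSet_Ioo (ae_of_all _ fun y hy => ?_)
        ring
    _ = ∫⁻ s in Ioo (0:ℝ) 1, ENNReal.ofReal (s^3 * (1 - s^2) ^ (-1 - α)) *
          (∫⁻ x in Ioo s 1, ENNReal.ofReal (f x) * ENNReal.ofReal x) *
          (∫⁻ y in Ioo s 1, ENNReal.ofReal (f y) * ENNReal.ofReal y) :=
        swap_min _ _ hg hk
    _ ≤ ∫⁻ s in Ioo (0:ℝ) 1, (ENNReal.ofReal (s^3 * (1 - s^2) ^ (-1 - α)) *
          ENNReal.ofReal ((1 - s) ^ (α/2) / (α/2))) *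
          ∫⁻ x in Ioo s 1, ENNReal.ofReal (f x ^ 2 * (1 - x^2) ^ (1 - α/2) * x) :=
        lintegral_mono_ae ((ae_restrict_iff' measurableSet_Ioo).mpr (ae_of_all _ key))
    _ = ∫⁻ x in Ioo (0:ℝ) 1, ENNReal.ofReal (f x ^ 2 * (1 - x^2) ^ (1 - α/2) * x) *
          ∫⁻ s in Ioo 0 x, ENNReal.ofReal (s^3 * (1 - s^2) ^ (-1 - α)) *
            ENNReal.ofReal ((1 - s) ^ (α/2) / (α/2)) :=
        swap2 _ _ hkC hu
    _ ≤ ∫⁻ x in Ioo (0:ℝ) 1, ENNReal.ofReal (4 / α^2) *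
          ENNReal.ofReal (f x ^ 2 * (1 - x^2) ^ (1 - α) * x) :=
        lintegral_mono_ae ((ae_restrict_iff' measurableSet_Ioo).mpr (ae_of_all _ keyE))
    _ = ENNReal.ofReal (4 / α^2) *
          ∫⁻ x in Ioo (0:ℝ) 1, ENNReal.ofReal (f x ^ 2 * (1 - x^2) ^ (1 - α) * x) :=
        lintegral_const_mul _ (Measurable.ennreal_ofReal (by fun_prop))
end

section
/- Let 0 < α < 1, set β = 1 − α/2 and p(x) = (1 − x²)^{−β}. Then for every y ∈ (0,1), ∫₀¹ [ (1/(2α)) · min{x², y²} / ( (1 − min{x², y²})^α (1 − x²)^{1−α} (1 − y²)^{1−α} ) ] · p(x) (1 − x²)^{1−α} x dx ≤ (1/α²) p(y). -/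
open MeasureTheory Real Set

-- integrability of x*(1-x^2)^(a-1) on [y,1]
lemma integ2 (a y : ℝ) (ha : 0 < a) (ha1 : a ≤ 1) (hy0 : 0 ≤ y) (hy1 : y ≤ 1) :
    IntervalIntegrable (fun x => x * (1 - x^2) ^ (a - 1)) volume y 1 := by
  have hdom : IntervalIntegrable (fun x => (1 - x) ^ (a - 1)) volume y 1 := by
    have h := (intervalIntegral.intervalIntegrable_rpow' (a := 1 - 1) (b := 1 - y)
      (r := a - 1) (by linarith)).comp_sub_left 1
    simpa using h.symm
  apply hdom.mono_fun
  · apply Measurable.aestronglyMeasurable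
    fun_prop
  · rw [Filter.EventuallyLE, ae_restrict_iff' measurableSet_uIoc]
    filter_upwards with x hx
    rw [Set.uIoc_of_le hy1] at hx
    obtain ⟨hx1, hx2⟩ := hx
    have h0x : 0 < x := lt_of_le_of_lt hy0 hx1
    have h1 : (0:ℝ) ≤ 1 - x := by linarith
    have : (1 - x^2 : ℝ) = (1-x)*(1+x) := by ring
    rw [Real.norm_eq_abs, Real.norm_eq_abs, this,
      Real.mul_rpow h1 (by linarith), abs_of_nonneg (by positivity),
      abs_of_nonneg (by positivity)]
    calc x * ((1-x)^(a-1) * (1+x)^(a-1)) ≤ 1 * ((1-x)^(a-1) * 1) := by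
          apply mul_le_mul hx2 ?_ (by positivity) zero_le_one
          apply mul_le_mul_of_nonneg_left ?_ (by positivity)
          calc (1+x)^(a-1) ≤ (1+x)^(0:ℝ) := by
                apply Real.rpow_le_rpow_of_exponent_le (by linarith) (by linarith)
            _ = 1 := Real.rpow_zero _
      _ = (1-x)^(a-1) := by ring

lemma val2 (a y : ℝ) (ha : 0 < a) (ha1 : a ≤ 1) (hy0 : 0 ≤ y) (hy1 : y < 1) :
    ∫ x in y..1, x * (1 - x^2) ^ (a - 1) = (1 - y^2)^a / (2*a) := by
  have key := intervalIntegral.integral_eq_sub_of_hasDeriv_right_of_le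
    (f := fun x => -(1 - x^2)^a / (2*a))
    (f' := fun x => x * (1 - x^2) ^ (a - 1)) hy1.le ?_ ?_ (integ2 a y ha ha1 hy0 hy1.le)
  · rw [key]
    rw [show (1 - (1:ℝ)^2) = 0 by ring, Real.zero_rpow (by positivity)]
    ring
  · apply ContinuousOn.div_const
    apply ContinuousOn.neg
    apply ContinuousOn.rpow_const (by fun_prop)
    intro x hx
    right; positivity
  · intro x hx
    obtain ⟨hx1, hx2⟩ := hx
    have hu : (0:ℝ) < 1 - x^2 := by nlinarith [lt_of_le_of_lt hy0 hx1]
    apply HasDerivAt.hasDerivWithinAt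
    have h1 : HasDerivAt (fun x : ℝ => 1 - x^2) (-(2*x)) x := by
      simpa using ((hasDerivAt_pow 2 x).const_sub 1)
    have h2 := (h1.rpow_const (p := a) (Or.inl hu.ne'))
    have h3 := (h2.neg).div_const (2*a)
    convert h3 using 1
    · rfl
    · rfl
    rw [eq_div_iff (by positivity)]
    ring

lemma val1 (b y : ℝ) (hb : 0 < b) (hy0 : 0 ≤ y) (hy1 : y < 1) :
    ∫ x in (0:ℝ)..y, x * (1 - x^2) ^ (-b - 1) = ((1-y^2)^(-b) - 1) / (2*b) := by
  have key := intervalIntegral.integral_eq_sub_of_hasDerivAt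
    (f := fun x => (1 - x^2)^(-b) / (2*b))
    (f' := fun x => x * (1 - x^2) ^ (-b - 1)) (a := 0) (b := y) ?_ ?_
  · rw [key]
    rw [show (1 - (0:ℝ)^2) = 1 by ring, Real.one_rpow]
    ring
  · intro x hx
    rw [Set.uIcc_of_le hy0] at hx
    obtain ⟨hx1, hx2⟩ := hx
    have hu : (0:ℝ) < 1 - x^2 := by nlinarith
    have h1 : HasDerivAt (fun x : ℝ => 1 - x^2) (-(2*x)) x := by
      simpa using ((hasDerivAt_pow 2 x).const_sub 1)
    have h2 := (h1.rpow_const (p := -b) (Or.inl hu.ne')).div_const (2*b)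
    convert h2 using 1
    · rfl
    rw [eq_div_iff (by positivity)]
    ring
  · apply ContinuousOn.intervalIntegrable
    apply ContinuousOn.mul (by fun_prop)
    apply ContinuousOn.rpow_const (by fun_prop)
    intro x hx
    rw [Set.uIcc_of_le hy0] at hx
    left
    nlinarith [hx.1, hx.2]

lemma key1 (α c u v x : ℝ) (hu : 0 < u) (hv : 0 < v) :
    c * x^2 / (u ^ α * u ^ (1 - α) * v ^ (1-α)) * (u ^ (-(1 - α/2)) * u ^ (1-α) * x)
      = c * x^3 * (u ^ (-(α/2) - 1) * v ^ (α - 1)) := by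
  have h1 : u ^ α * u ^ (1-α) = u := by
    rw [← Real.rpow_add hu]; simp
  have h2 : u ^ (-(1 - α/2)) * u ^ (1-α) = u ^ (-(α/2)) := by
    rw [← Real.rpow_add hu]; ring_nf
  have h3 : u ^ (-(α/2) - 1) = u ^ (-(α/2)) / u := by
    rw [Real.rpow_sub hu, Real.rpow_one]
  have h4 : v ^ (α - 1) = (v ^ (1 - α))⁻¹ := by
    rw [← Real.rpow_neg hv.le]; ring_nf
  rw [h1, h2, h3, h4]
  have := (Real.rpow_pos_of_pos hv (1-α)).ne'
  have := (Real.rpow_pos_of_pos hu (-(α/2))).ne'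
  field_simp

lemma key2 (α c u v x y : ℝ) (hu : 0 < u) (hv : 0 < v) :
    c * y^2 / (v ^ α * u ^ (1 - α) * v ^ (1-α)) * (u ^ (-(1 - α/2)) * u ^ (1-α) * x)
      = c * y^2 * x * u ^ (α/2 - 1) / v := by
  have h1 : v ^ α * v ^ (1-α) = v := by
    rw [← Real.rpow_add hv]; simp
  have h2 : u ^ (-(1 - α/2)) = u ^ (α/2 - 1) := by ring_nf
  rw [h2]
  have hq := (Real.rpow_pos_of_pos hu (1-α)).ne'
  have hq2 := (Real.rpow_pos_of_pos hv α).ne'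
  have hq3 := (Real.rpow_pos_of_pos hv (1-α)).ne'
  field_simp
  linear_combination (-(c*y^2*x)) * h1

theorem stmt9 (α : ℝ) (hα0 : 0 < α) (hα1 : α < 1) (β : ℝ) (hβ : β = 1 - α / 2)
    (p : ℝ → ℝ) (hp : ∀ x, p x = (1 - x^2) ^ (-β)) (y : ℝ) (hy : y ∈ Ioo (0:ℝ) 1) :
    ∫⁻ x in Ioo (0:ℝ) 1,
        ENNReal.ofReal ((1 / (2 * α)) * min (x^2) (y^2) /
            ((1 - min (x^2) (y^2)) ^ α * (1 - x^2) ^ (1 - α) * (1 - y^2) ^ (1 - α)) *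
          (p x * (1 - x^2) ^ (1 - α) * x))
      ≤ ENNReal.ofReal ((1 / α^2) * p y) := by
  obtain ⟨hy0, hy1⟩ := hy
  have hv : (0:ℝ) < 1 - y^2 := by nlinarith
  have ha2 : (0:ℝ) < α/2 := by linarith
  set V1 : ℝ := (1-y^2)^(α-1)/(2*α) * (((1-y^2)^(-(α/2)) - 1)/(2*(α/2))) with hV1
  set V2 : ℝ := (1-y^2)⁻¹/(2*α) * ((1-y^2)^(α/2)/(2*(α/2))) with hV2
  have hsplit : Ioo (0:ℝ) 1 = Ioo 0 y ∪ Ico y 1 := (Ioo_union_Ico_eq_Ioo hy0 hy1.le).symm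
  have hdisj : Disjoint (Ioo (0:ℝ) y) (Ico y 1) := by
    rw [Set.disjoint_left]
    rintro x ⟨_, h2⟩ ⟨h3, _⟩
    exact absurd h3 (not_le.2 h2)
  rw [hsplit, lintegral_union measurableSet_Ico hdisj]
  -- piece 1
  have p1 : (∫⁻ x in Ioo (0:ℝ) y,
      ENNReal.ofReal ((1 / (2 * α)) * min (x^2) (y^2) /
            ((1 - min (x^2) (y^2)) ^ α * (1 - x^2) ^ (1 - α) * (1 - y^2) ^ (1 - α)) *
          (p x * (1 - x^2) ^ (1 - α) * x))) ≤ ENNReal.ofReal V1 := by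
    have hmeas : Measurable (fun x : ℝ =>
        ENNReal.ofReal ((1-y^2)^(α-1)/(2*α) * (x * (1-x^2)^(-(α/2)-1)))) := by
      apply Measurable.ennreal_ofReal
      apply Measurable.const_mul
      exact (measurable_id.mul ((measurable_const.sub (measurable_id.pow_const 2)).pow measurable_const))
    calc ∫⁻ x in Ioo (0:ℝ) y,
        ENNReal.ofReal ((1 / (2 * α)) * min (x^2) (y^2) /
            ((1 - min (x^2) (y^2)) ^ α * (1 - x^2) ^ (1 - α) * (1 - y^2) ^ (1 - α)) *
          (p x * (1 - x^2) ^ (1 - α) * x))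
        ≤ ∫⁻ x in Ioo (0:ℝ) y,
          ENNReal.ofReal ((1-y^2)^(α-1)/(2*α) * (x * (1-x^2)^(-(α/2)-1))) := by
          apply setLIntegral_mono hmeas
          intro x hx
          obtain ⟨hx0, hxy⟩ := hx
          have hu : (0:ℝ) < 1 - x^2 := by nlinarith
          have hmin : min (x^2) (y^2) = x^2 := min_eq_left (by nlinarith)
          rw [hmin, hp x, hβ]
          rw [show ((1 - x ^ 2 :ℝ) ^ (-(1 - α / 2))) = (1 - x^2)^(-(1-α/2)) from rfl]
          rw [key1 α (1/(2*α)) (1-x^2) (1-y^2) x hu hv]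
          apply ENNReal.ofReal_le_ofReal
          have hx3 : x^3 ≤ x := by nlinarith
          have hA : (0:ℝ) < (1-x^2)^(-(α/2)-1) := Real.rpow_pos_of_pos hu _
          have hB : (0:ℝ) < (1-y^2)^(α-1) := Real.rpow_pos_of_pos hv _
          calc 1/(2*α) * x^3 * ((1-x^2)^(-(α/2)-1) * (1-y^2)^(α-1))
              ≤ 1/(2*α) * x * ((1-x^2)^(-(α/2)-1) * (1-y^2)^(α-1)) := by
                apply mul_le_mul_of_nonneg_right ?_ (by positivity)
                apply mul_le_mul_of_nonneg_left hx3 (by positivity)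
            _ = (1-y^2)^(α-1)/(2*α) * (x * (1-x^2)^(-(α/2)-1)) := by ring
      _ = ENNReal.ofReal (∫ x in Ioo (0:ℝ) y,
            (1-y^2)^(α-1)/(2*α) * (x * (1-x^2)^(-(α/2)-1))) := by
          rw [ofReal_integral_eq_lintegral_ofReal]
          · apply Integrable.const_mul
            apply (ContinuousOn.integrableOn_Icc ?_).mono_set Ioo_subset_Icc_self
            apply ContinuousOn.mul (by fun_prop)
            apply ContinuousOn.rpow_const (by fun_prop)
            intro x hx
            left
            have := hx.1; have := hx.2
            nlinarith
          · rw [Filter.EventuallyLE, ae_restrict_iff' measurableSet_Ioo]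
            filter_upwards with x hx
            have hu : (0:ℝ) < 1 - x^2 := by nlinarith [hx.1, hx.2]
            have := hx.1
            positivity
      _ ≤ ENNReal.ofReal V1 := by
          apply ENNReal.ofReal_le_ofReal
          rw [MeasureTheory.integral_const_mul, ← integral_Ioc_eq_integral_Ioo,
            ← intervalIntegral.integral_of_le hy0.le,
            val1 (α/2) y ha2 hy0.le hy1]
  -- piece 2
  have p2 : (∫⁻ x in Ico y 1,
      ENNReal.ofReal ((1 / (2 * α)) * min (x^2) (y^2) /
            ((1 - min (x^2) (y^2)) ^ α * (1 - x^2) ^ (1 - α) * (1 - y^2) ^ (1 - α)) *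
          (p x * (1 - x^2) ^ (1 - α) * x))) ≤ ENNReal.ofReal V2 := by
    rw [setLIntegral_congr (MeasureTheory.Ioo_ae_eq_Ico (μ := volume) (a := y) (b := 1)).symm]
    have hmeas : Measurable (fun x : ℝ =>
        ENNReal.ofReal ((1-y^2)⁻¹/(2*α) * (x * (1-x^2)^(α/2-1)))) := by
      apply Measurable.ennreal_ofReal
      apply Measurable.const_mul
      exact (measurable_id.mul ((measurable_const.sub (measurable_id.pow_const 2)).pow measurable_const))
    calc ∫⁻ x in Ioo y 1,
        ENNReal.ofReal ((1 / (2 * α)) * min (x^2) (y^2) /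
            ((1 - min (x^2) (y^2)) ^ α * (1 - x^2) ^ (1 - α) * (1 - y^2) ^ (1 - α)) *
          (p x * (1 - x^2) ^ (1 - α) * x))
        ≤ ∫⁻ x in Ioo y 1,
          ENNReal.ofReal ((1-y^2)⁻¹/(2*α) * (x * (1-x^2)^(α/2-1))) := by
          apply setLIntegral_mono hmeas
          intro x hx
          obtain ⟨hxy, hx1⟩ := hx
          have hx0 : (0:ℝ) < x := lt_trans hy0 hxy
          have hu : (0:ℝ) < 1 - x^2 := by nlinarith
          have hmin : min (x^2) (y^2) = y^2 := min_eq_right (by nlinarith)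
          rw [hmin, hp x, hβ]
          rw [key2 α (1/(2*α)) (1-x^2) (1-y^2) x y hu hv]
          apply ENNReal.ofReal_le_ofReal
          have hA : (0:ℝ) < (1-x^2)^(α/2-1) := Real.rpow_pos_of_pos hu _
          have hy2 : y^2 ≤ 1 := by nlinarith
          rw [div_eq_mul_inv]
          have h1 : 1/(2*α) * y^2 * x * (1-x^2)^(α/2-1)
              ≤ 1/(2*α) * 1 * x * (1-x^2)^(α/2-1) := by
            apply mul_le_mul_of_nonneg_right ?_ hA.le
            apply mul_le_mul_of_nonneg_right ?_ hx0.le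
            apply mul_le_mul_of_nonneg_left hy2 (by positivity)
          calc 1/(2*α) * y^2 * x * (1-x^2)^(α/2-1) * (1-y^2)⁻¹
              ≤ (1/(2*α) * 1 * x * (1-x^2)^(α/2-1)) * (1-y^2)⁻¹ := by
                apply mul_le_mul_of_nonneg_right h1 (inv_nonneg.2 hv.le)
            _ = (1-y^2)⁻¹/(2*α) * (x * (1-x^2)^(α/2-1)) := by ring
      _ = ENNReal.ofReal (∫ x in Ioo y 1,
            (1-y^2)⁻¹/(2*α) * (x * (1-x^2)^(α/2-1))) := by
          rw [ofReal_integral_eq_lintegral_ofReal]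
          · apply Integrable.const_mul
            have h2 := (integ2 (α/2) y ha2 (by linarith) hy0.le hy1.le)
            rw [intervalIntegrable_iff, Set.uIoc_of_le hy1.le] at h2
            exact h2.mono_set Set.Ioo_subset_Ioc_self
          · rw [Filter.EventuallyLE, ae_restrict_iff' measurableSet_Ioo]
            filter_upwards with x hx
            have hu : (0:ℝ) < 1 - x^2 := by nlinarith [hx.1, hx.2]
            have hx0 : (0:ℝ) < x := lt_trans hy0 hx.1
            positivity
      _ ≤ ENNReal.ofReal V2 := by
          apply ENNReal.ofReal_le_ofReal
          rw [MeasureTheory.integral_const_mul, ← integral_Ioc_eq_integral_Ioo,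
            ← intervalIntegral.integral_of_le hy1.le,
            val2 (α/2) y ha2 (by linarith) hy0.le hy1]
  calc _ ≤ ENNReal.ofReal V1 + ENNReal.ofReal V2 := add_le_add p1 p2
    _ = ENNReal.ofReal (V1 + V2) := by
        rw [ENNReal.ofReal_add]
        · rw [hV1]
          have h1 : (1:ℝ) ≤ (1-y^2)^(-(α/2)) :=
            Real.one_le_rpow_of_pos_of_le_one_of_nonpos hv (by nlinarith) (by linarith)
          have hB : (0:ℝ) < (1-y^2)^(α-1) := Real.rpow_pos_of_pos hv _
          apply mul_nonneg (by positivity) (div_nonneg (by linarith) (by positivity))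
        · rw [hV2]
          have h3 : (0:ℝ) < (1-y^2)^(α/2) := Real.rpow_pos_of_pos hv _
          have h4 : (0:ℝ) < (1-y^2)⁻¹ := by positivity
          positivity
    _ ≤ ENNReal.ofReal ((1 / α^2) * p y) := by
        apply ENNReal.ofReal_le_ofReal
        rw [hp y, hβ, hV1, hV2]
        have e1 : (1-y^2)^(α-1) * (1-y^2)^(-(α/2)) = (1-y^2)^(-(1-α/2)) := by
          rw [← Real.rpow_add hv]; ring_nf
        have e2 : (1-y^2)⁻¹ * (1-y^2)^(α/2) = (1-y^2)^(-(1-α/2)) := by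
          rw [← Real.rpow_neg_one, ← Real.rpow_add hv]; ring_nf
        have hB : (0:ℝ) < (1-y^2)^(α-1) := Real.rpow_pos_of_pos hv _
        have key : (1-y^2)^(α-1)/(2*α) * (((1-y^2)^(-(α/2)) - 1)/(2*(α/2)))
            + (1-y^2)⁻¹/(2*α) * ((1-y^2)^(α/2)/(2*(α/2)))
            = ((1-y^2)^(α-1) * (1-y^2)^(-(α/2)) - (1-y^2)^(α-1))/(2*α^2)
              + ((1-y^2)⁻¹ * (1-y^2)^(α/2))/(2*α^2) := by
          field_simp
        rw [key, e1, e2, ← add_div]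
        have h2 : 1/α^2 * (1-y^2)^(-(1-α/2))
            = ((1-y^2)^(-(1-α/2)) + (1-y^2)^(-(1-α/2)))/(2*α^2) := by
          field_simp
          ring
        rw [h2]
        gcongr
        linarith [hB]
end

section
/- Let 0 < α < 1 and define, for f ∈ L²_α[0,1], the operator (T₀ f)(s) = −∫₀^s (r/s) f(r) dr + (1/(1 − s²)) ∫_s^1 r s f(r) dr for s ∈ (0,1). Then ∫₀¹ |T₀ f(s)|² (1 − s²)^{1−α} s ds ≤ (5/α²)² ∫₀¹ |f(r)|² (1 − r²)^{1−α} r dr. -/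
open MeasureTheory Real Set ENNReal NNReal

/-- The operator `T₀` of the radial decomposition:
`(T₀ f)(s) = -∫₀ˢ (r/s) f(r) dr + (1/(1-s²)) ∫_s^1 r s f(r) dr`. -/
noncomputable def T0 (f : ℝ → ℂ) (s : ℝ) : ℂ :=
  -(∫ r in Ioo (0:ℝ) s, ((r / s : ℝ) : ℂ) * f r) +
    ((1 / (1 - s^2) : ℝ) : ℂ) * ∫ r in Ioo s (1:ℝ), ((r * s : ℝ) : ℂ) * f r

namespace Stmt10Aux

/-! ### Generic integral helpers -/

lemma intervalIntegrable_one_sub_rpow {p : ℝ} (hp : -1 < p) (a b : ℝ) :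
    IntervalIntegrable (fun x : ℝ => (1 - x) ^ p) volume a b := by
  simpa using (intervalIntegral.intervalIntegrable_rpow' (a := 1 - a) (b := 1 - b) hp).comp_sub_left 1

lemma integral_one_sub_rpow {p : ℝ} (hp : -1 < p) (a b : ℝ) :
    ∫ x in a..b, (1 - x) ^ p = ((1 - a) ^ (p + 1) - (1 - b) ^ (p + 1)) / (p + 1) := by
  rw [intervalIntegral.integral_comp_sub_left (fun y : ℝ => y ^ p) 1,
    integral_rpow (Or.inl hp)]

lemma lintegral_Ioo_ofReal_le {g : ℝ → ℝ} {a b C : ℝ} (hab : a ≤ b)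
    (hint : IntervalIntegrable g volume a b)
    (hg : ∀ x ∈ Ioo a b, 0 ≤ g x)
    (hC : (∫ x in a..b, g x) ≤ C) :
    ∫⁻ x in Ioo a b, ENNReal.ofReal (g x) ≤ ENNReal.ofReal C := by
  have hio : IntegrableOn g (Ioo a b) := by
    rw [intervalIntegrable_iff, uIoc_of_le hab] at hint
    exact hint.mono_set Ioo_subset_Ioc_self
  rw [← ofReal_integral_eq_lintegral_ofReal hio
    ((ae_restrict_iff' measurableSet_Ioo).2 (ae_of_all _ hg))]
  apply ENNReal.ofReal_le_ofReal
  calc ∫ x in Ioo a b, g x = ∫ x in a..b, g x := by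
        rw [intervalIntegral.integral_of_le hab]
        exact setIntegral_congr_set Ioo_ae_eq_Ioc
  _ ≤ C := hC

/-! ### The kernel and auxiliary weights -/

noncomputable def K0 (s r : ℝ) : ℝ≥0∞ :=
  if r < s then ENNReal.ofReal (r / s) else ENNReal.ofReal (r * s / (1 - s ^ 2))

noncomputable def Hh (α r : ℝ) : ℝ := r⁻¹ * (1 - r ^ 2) ^ (-(1 - α / 2))

noncomputable def Gg (α s : ℝ) : ℝ := (1 - s ^ 2) ^ (-(α / 2))

noncomputable def ww (α r : ℝ) : ℝ := (1 - r ^ 2) ^ (1 - α) * r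

lemma one_sub_sq_pos {r : ℝ} (hr : r ∈ Ioo (0:ℝ) 1) : 0 < 1 - r ^ 2 := by
  have h1 := hr.1; have h2 := hr.2; nlinarith

lemma Hh_pos {α r : ℝ} (hr : r ∈ Ioo (0:ℝ) 1) : 0 < Hh α r :=
  mul_pos (inv_pos.2 hr.1) (Real.rpow_pos_of_pos (one_sub_sq_pos hr) _)

lemma Gg_pos {α r : ℝ} (hr : r ∈ Ioo (0:ℝ) 1) : 0 < Gg α r :=
  Real.rpow_pos_of_pos (one_sub_sq_pos hr) _

lemma ww_pos {α r : ℝ} (hr : r ∈ Ioo (0:ℝ) 1) : 0 < ww α r :=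
  mul_pos (Real.rpow_pos_of_pos (one_sub_sq_pos hr) _) hr.1

lemma Hh_mul_ww {α r : ℝ} (hr : r ∈ Ioo (0:ℝ) 1) : Hh α r * ww α r = Gg α r := by
  have h2 : (0:ℝ) < 1 - r ^ 2 := one_sub_sq_pos hr
  have e : Hh α r * ww α r
      = (r⁻¹ * r) * ((1 - r ^ 2) ^ (-(1 - α / 2)) * (1 - r ^ 2) ^ (1 - α)) := by
    unfold Hh ww; ring
  rw [e, inv_mul_cancel₀ hr.1.ne', one_mul, ← Real.rpow_add h2,
    show -(1 - α / 2) + (1 - α) = -(α / 2) by ring, Gg]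

lemma K0_measurable (s : ℝ) : Measurable (K0 s) := by
  unfold K0
  exact Measurable.ite (measurableSet_lt measurable_id measurable_const)
    (by fun_prop) (by fun_prop)

lemma K0_uncurry_measurable : Measurable (Function.uncurry fun s r : ℝ => K0 s r) := by
  unfold K0 Function.uncurry
  apply Measurable.ite (measurableSet_lt measurable_snd measurable_fst) <;> fun_prop

/-! ### The four one-dimensional estimates -/

lemma L1 {α : ℝ} (hα0 : 0 < α) (hα1 : α < 1) {s : ℝ} (hs : s ∈ Ioo (0:ℝ) 1) :
    ∫⁻ r in Ioo (0:ℝ) s, ENNReal.ofReal (r / s) * ENNReal.ofReal (Hh α r)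
      ≤ ENNReal.ofReal (2 / α) * ENNReal.ofReal (Hh α s) := by
  have hs0 := hs.1; have hs1 := hs.2
  have hp : (-1 : ℝ) < -(1 - α / 2) := by linarith
  have key : ∀ r ∈ Ioo (0:ℝ) s, ENNReal.ofReal (r / s) * ENNReal.ofReal (Hh α r)
      ≤ ENNReal.ofReal (s⁻¹ * (1 - r) ^ (-(1 - α / 2))) := by
    intro r hr
    have hr0 := hr.1; have hrs := hr.2
    have hr1 : r < 1 := lt_trans hrs hs1
    have h2 : (0:ℝ) < 1 - r ^ 2 := by nlinarith
    rw [← ENNReal.ofReal_mul (by positivity)]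
    apply ENNReal.ofReal_le_ofReal
    have e1 : r / s * Hh α r = s⁻¹ * (1 - r ^ 2) ^ (-(1 - α / 2)) := by
      have : r / s * Hh α r
          = (r * r⁻¹) * (s⁻¹ * (1 - r ^ 2) ^ (-(1 - α / 2))) := by
        unfold Hh; rw [div_eq_mul_inv]; ring
      rw [this, mul_inv_cancel₀ hr0.ne', one_mul]
    rw [e1]
    have hbd : (1 - r ^ 2) ^ (-(1 - α / 2)) ≤ (1 - r) ^ (-(1 - α / 2)) := by
      rw [show (1 - r ^ 2 : ℝ) = (1 - r) * (1 + r) by ring,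
        Real.mul_rpow (by linarith) (by linarith)]
      have h1 : (1 + r) ^ (-(1 - α / 2)) ≤ 1 :=
        Real.rpow_le_one_of_one_le_of_nonpos (by linarith) (by linarith)
      have h0 : (0:ℝ) ≤ (1 - r) ^ (-(1 - α / 2)) :=
        Real.rpow_nonneg (by linarith) _
      nlinarith
    exact mul_le_mul_of_nonneg_left hbd (by positivity)
  refine le_trans (setLIntegral_mono (by fun_prop) key) ?_
  have hC : (∫ x in (0:ℝ)..s, s⁻¹ * (1 - x) ^ (-(1 - α / 2))) ≤ s⁻¹ * (2 / α) := by
    rw [intervalIntegral.integral_const_mul, integral_one_sub_rpow hp,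
      show -(1 - α / 2) + 1 = α / 2 by ring]
    have hX : (0:ℝ) ≤ (1 - s) ^ (α / 2) := Real.rpow_nonneg (by linarith) _
    have h1 : ((1 - 0 : ℝ)) ^ (α / 2) = 1 := by norm_num [Real.one_rpow]
    rw [h1]
    apply mul_le_mul_of_nonneg_left _ (by positivity)
    rw [div_le_div_iff₀ (by linarith) hα0]
    nlinarith
  refine le_trans (lintegral_Ioo_ofReal_le hs0.le
    ((intervalIntegrable_one_sub_rpow hp 0 s).const_mul _)
    (fun x hx => by
      have := Real.rpow_nonneg (show (0:ℝ) ≤ 1 - x by nlinarith [hx.2, hs1]) (-(1 - α / 2))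
      positivity) hC) ?_
  rw [show s⁻¹ * (2 / α) = 2 / α * s⁻¹ by ring, ENNReal.ofReal_mul (by positivity)]
  apply mul_le_mul_right
  apply ENNReal.ofReal_le_ofReal
  have hone : (1:ℝ) ≤ (1 - s ^ 2) ^ (-(1 - α / 2)) :=
    Real.one_le_rpow_of_pos_of_le_one_of_nonpos (one_sub_sq_pos hs)
      (by nlinarith) (by linarith)
  unfold Hh
  nlinarith [inv_pos.2 hs0]

lemma L2 {α : ℝ} (hα0 : 0 < α) (hα1 : α < 1) {s : ℝ} (hs : s ∈ Ioo (0:ℝ) 1) :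
    ∫⁻ r in Ioo s (1:ℝ), ENNReal.ofReal (r * s / (1 - s ^ 2)) * ENNReal.ofReal (Hh α r)
      ≤ ENNReal.ofReal (2 / α) * ENNReal.ofReal (Hh α s) := by
  have hs0 := hs.1; have hs1 := hs.2
  have h2s : (0:ℝ) < 1 - s ^ 2 := one_sub_sq_pos hs
  have hp : (-1 : ℝ) < -(1 - α / 2) := by linarith
  have key : ∀ r ∈ Ioo s (1:ℝ), ENNReal.ofReal (r * s / (1 - s ^ 2)) * ENNReal.ofReal (Hh α r)
      ≤ ENNReal.ofReal ((s / (1 - s ^ 2)) * (1 - r) ^ (-(1 - α / 2))) := by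
    intro r hr
    have hr0 : 0 < r := lt_trans hs0 hr.1
    have hr1 := hr.2
    have h2 : (0:ℝ) < 1 - r ^ 2 := by nlinarith
    rw [← ENNReal.ofReal_mul (by positivity)]
    apply ENNReal.ofReal_le_ofReal
    have e1 : r * s / (1 - s ^ 2) * Hh α r
        = (r * r⁻¹) * ((s / (1 - s ^ 2)) * (1 - r ^ 2) ^ (-(1 - α / 2))) := by
      unfold Hh; ring
    rw [e1, mul_inv_cancel₀ hr0.ne', one_mul]
    have hbd : (1 - r ^ 2) ^ (-(1 - α / 2)) ≤ (1 - r) ^ (-(1 - α / 2)) := by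
      rw [show (1 - r ^ 2 : ℝ) = (1 - r) * (1 + r) by ring,
        Real.mul_rpow (by linarith) (by linarith)]
      have h1 : (1 + r) ^ (-(1 - α / 2)) ≤ 1 :=
        Real.rpow_le_one_of_one_le_of_nonpos (by linarith) (by linarith)
      have h0 : (0:ℝ) ≤ (1 - r) ^ (-(1 - α / 2)) := Real.rpow_nonneg (by linarith) _
      nlinarith
    exact mul_le_mul_of_nonneg_left hbd (by positivity)
  refine le_trans (setLIntegral_mono (by fun_prop) key) ?_
  have hC : (∫ x in s..(1:ℝ), (s / (1 - s ^ 2)) * (1 - x) ^ (-(1 - α / 2)))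
      ≤ 2 / α * Hh α s := by
    rw [intervalIntegral.integral_const_mul, integral_one_sub_rpow hp,
      show -(1 - α / 2) + 1 = α / 2 by ring]
    have h1 : ((1 - 1 : ℝ)) ^ (α / 2) = 0 := by
      norm_num; exact Real.zero_rpow (by positivity)
    rw [h1, sub_zero]
    -- goal : s / (1-s^2) * ((1-s)^(α/2) / (α/2)) ≤ 2/α * Hh α s
    have hXpos : (0:ℝ) < (1 - s) ^ (α / 2) := Real.rpow_pos_of_pos (by linarith) _
    have hYpos : (0:ℝ) < (1 + s) ^ (α / 2) := Real.rpow_pos_of_pos (by linarith) _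
    have hY1 : (1:ℝ) ≤ (1 + s) ^ (α / 2) := Real.one_le_rpow (by linarith) (by positivity)
    have hsplit : (1 - s ^ 2) ^ (α / 2) = (1 - s) ^ (α / 2) * (1 + s) ^ (α / 2) := by
      rw [show (1 - s ^ 2 : ℝ) = (1 - s) * (1 + s) by ring,
        Real.mul_rpow (by linarith) (by linarith)]
    have hHh : Hh α s = s⁻¹ * ((1 - s) ^ (α / 2) * (1 + s) ^ (α / 2)) / (1 - s ^ 2) := by
      unfold Hh
      rw [show -(1 - α / 2) = α / 2 + (-1 : ℝ) by ring, Real.rpow_add h2s,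
        Real.rpow_neg_one, hsplit]
      field_simp
    rw [hHh]
    set X := (1 - s) ^ (α / 2) with hX
    set Y := (1 + s) ^ (α / 2) with hYdef
    have hsinv : (1:ℝ) ≤ s⁻¹ := by
      nlinarith [mul_inv_cancel₀ hs0.ne', inv_pos.2 hs0]
    have base : s * X ≤ s⁻¹ * (X * Y) := by
      have t1 : s * X ≤ 1 * X := mul_le_mul_of_nonneg_right hs1.le hXpos.le
      have t2 : (1:ℝ) * X ≤ s⁻¹ * X := mul_le_mul_of_nonneg_right hsinv hXpos.le
      have t3 : s⁻¹ * X ≤ s⁻¹ * (X * Y) := by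
        have h4 := le_mul_of_one_le_right (mul_nonneg (inv_nonneg.2 hs0.le) hXpos.le) hY1
        nlinarith [h4]
      linarith
    calc s / (1 - s ^ 2) * (X / (α / 2)) = s * (2 / α) * X / (1 - s ^ 2) := by
          field_simp
      _ ≤ 2 / α * (s⁻¹ * (X * Y)) / (1 - s ^ 2) := by
          rw [div_le_div_iff₀ h2s h2s]
          nlinarith [mul_le_mul_of_nonneg_right
            (mul_le_mul_of_nonneg_left base (le_of_lt (div_pos two_pos hα0))) h2s.le]
      _ = 2 / α * (s⁻¹ * (X * Y) / (1 - s ^ 2)) := by ring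
  refine le_trans (lintegral_Ioo_ofReal_le hs1.le
    ((intervalIntegrable_one_sub_rpow hp s 1).const_mul _)
    (fun x hx => by
      have := Real.rpow_nonneg (show (0:ℝ) ≤ 1 - x by nlinarith [hx.2]) (-(1 - α / 2))
      positivity) hC) ?_
  rw [ENNReal.ofReal_mul (by positivity)]

lemma L3 {α : ℝ} (hα0 : 0 < α) (hα1 : α < 1) {r : ℝ} (hr : r ∈ Ioo (0:ℝ) 1) :
    ∫⁻ s in Ioo r (1:ℝ), ENNReal.ofReal (r / s) * ENNReal.ofReal (Gg α s)
      ≤ ENNReal.ofReal (4 : ℝ) * ENNReal.ofReal (Gg α r) := by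
  have hr0 := hr.1; have hr1 := hr.2
  have hp : (-1 : ℝ) < -(α / 2) := by linarith
  have key : ∀ s ∈ Ioo r (1:ℝ), ENNReal.ofReal (r / s) * ENNReal.ofReal (Gg α s)
      ≤ ENNReal.ofReal ((1 - s) ^ (-(α / 2))) := by
    intro s hsm
    have hs0 : 0 < s := lt_trans hr0 hsm.1
    have hs1 := hsm.2
    have h2 : (0:ℝ) < 1 - s ^ 2 := by nlinarith
    rw [← ENNReal.ofReal_mul (by positivity)]
    apply ENNReal.ofReal_le_ofReal
    have hrs : r / s ≤ 1 := by rw [div_le_one hs0]; exact hsm.1.le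
    have hGb : Gg α s ≤ (1 - s) ^ (-(α / 2)) := by
      unfold Gg
      rw [show (1 - s ^ 2 : ℝ) = (1 - s) * (1 + s) by ring,
        Real.mul_rpow (by linarith) (by linarith)]
      have h1 : (1 + s) ^ (-(α / 2)) ≤ 1 :=
        Real.rpow_le_one_of_one_le_of_nonpos (by linarith) (by linarith)
      have h0 : (0:ℝ) ≤ (1 - s) ^ (-(α / 2)) := Real.rpow_nonneg (by linarith) _
      nlinarith
    have hGnn : 0 ≤ Gg α s := (Gg_pos ⟨hs0, hs1⟩).le
    calc r / s * Gg α s ≤ 1 * Gg α s := mul_le_mul_of_nonneg_right hrs hGnn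
      _ = Gg α s := one_mul _
      _ ≤ _ := hGb
  refine le_trans (setLIntegral_mono (by fun_prop) key) ?_
  have h2r : (0:ℝ) < 1 - r ^ 2 := one_sub_sq_pos hr
  have hC : (∫ x in r..(1:ℝ), (1 - x) ^ (-(α / 2))) ≤ 4 * Gg α r := by
    rw [integral_one_sub_rpow hp, show -(α / 2) + 1 = 1 - α / 2 by ring]
    have h1 : ((1 - 1 : ℝ)) ^ (1 - α / 2) = 0 := by
      rw [sub_self]
      exact Real.zero_rpow (by linarith : (0:ℝ) < 1 - α / 2).ne'
    rw [h1, sub_zero]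
    set X := (1 - r) ^ (-(α / 2)) with hXd
    set W := (1 + r) ^ (α / 2) with hWd
    have hXpos : 0 < X := Real.rpow_pos_of_pos (by linarith) _
    have hWpos : 0 < W := Real.rpow_pos_of_pos (by linarith) _
    have e1 : (1 - r) ^ (1 - α / 2) = (1 - r) * X := by
      rw [hXd, show (1 - α / 2 : ℝ) = 1 + (-(α / 2)) by ring,
        Real.rpow_add (by linarith), Real.rpow_one]
    have hZ : W ≤ 2 := by
      rw [hWd]
      calc (1 + r) ^ (α / 2) ≤ 2 ^ (α / 2) :=
            Real.rpow_le_rpow (by linarith) (by linarith) (by positivity)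
        _ ≤ (2:ℝ) ^ (1:ℝ) := Real.rpow_le_rpow_of_exponent_le (by norm_num) (by linarith)
        _ = 2 := Real.rpow_one 2
    have hsplit : Gg α r = X * W⁻¹ := by
      unfold Gg
      rw [show (1 - r ^ 2 : ℝ) = (1 - r) * (1 + r) by ring,
        Real.mul_rpow (by linarith) (by linarith),
        Real.rpow_neg (by linarith : (0:ℝ) ≤ 1 + r), ← hWd, ← hXd]
    have hWinv : (1:ℝ) / 2 ≤ W⁻¹ := by
      nlinarith [mul_inv_cancel₀ hWpos.ne', inv_pos.2 hWpos]
    rw [e1, hsplit, div_le_iff₀ (by linarith : (0:ℝ) < 1 - α / 2)]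
    have s1 : X * (1 / 2) ≤ X * W⁻¹ := mul_le_mul_of_nonneg_left hWinv hXpos.le
    have s2 : (X * (1 / 2)) * (1 - α / 2) ≤ (X * W⁻¹) * (1 - α / 2) :=
      mul_le_mul_of_nonneg_right s1 (by linarith)
    have s3 : (X * (1 / 2)) * (1 / 2) ≤ (X * (1 / 2)) * (1 - α / 2) :=
      mul_le_mul_of_nonneg_left (by linarith) (by positivity)
    nlinarith [hXpos]
  refine le_trans (lintegral_Ioo_ofReal_le hr1.le (intervalIntegrable_one_sub_rpow hp r 1)
    (fun x hx => Real.rpow_nonneg (by nlinarith [hx.2] : (0:ℝ) ≤ 1 - x) _) hC) ?_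
  rw [ENNReal.ofReal_mul (by norm_num)]

lemma L4 {α : ℝ} (hα0 : 0 < α) (hα1 : α < 1) {r : ℝ} (hr : r ∈ Ioo (0:ℝ) 1) :
    ∫⁻ s in Ioo (0:ℝ) r, ENNReal.ofReal (r * s / (1 - s ^ 2)) * ENNReal.ofReal (Gg α s)
      ≤ ENNReal.ofReal (1 / α) * ENNReal.ofReal (Gg α r) := by
  have hr0 := hr.1; have hr1 := hr.2
  have h2r : (0:ℝ) < 1 - r ^ 2 := one_sub_sq_pos hr
  have key : ∀ s ∈ Ioo (0:ℝ) r, ENNReal.ofReal (r * s / (1 - s ^ 2)) * ENNReal.ofReal (Gg α s)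
      ≤ ENNReal.ofReal (s * (1 - s ^ 2) ^ (-(1 + α / 2))) := by
    intro s hsm
    have hs0 := hsm.1; have hsr := hsm.2
    have hs1 : s < 1 := lt_trans hsr hr1
    have h2 : (0:ℝ) < 1 - s ^ 2 := by nlinarith
    rw [← ENNReal.ofReal_mul (by positivity)]
    apply ENNReal.ofReal_le_ofReal
    have e1 : r * s / (1 - s ^ 2) * Gg α s = r * (s * (1 - s ^ 2) ^ (-(1 + α / 2))) := by
      unfold Gg
      rw [show (-(1 + α / 2) : ℝ) = -(α / 2) - 1 by ring, Real.rpow_sub h2, Real.rpow_one]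
      ring
    rw [e1]
    have hg0 : 0 ≤ s * (1 - s ^ 2) ^ (-(1 + α / 2)) :=
      mul_nonneg hs0.le (Real.rpow_nonneg h2.le _)
    nlinarith [hg0]
  refine le_trans (setLIntegral_mono (by fun_prop) key) ?_
  have hcont : ContinuousOn (fun s : ℝ => s * (1 - s ^ 2) ^ (-(1 + α / 2))) (uIcc 0 r) := by
    apply ContinuousOn.mul continuousOn_id
    apply ContinuousOn.rpow_const
    · exact (continuous_const.sub (continuous_pow 2)).continuousOn
    · intro x hx
      left
      rw [uIcc_of_le hr0.le] at hx
      have hx0 := hx.1; have hxr := hx.2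
      nlinarith
  have hint : IntervalIntegrable (fun s : ℝ => s * (1 - s ^ 2) ^ (-(1 + α / 2))) volume 0 r :=
    hcont.intervalIntegrable
  have hderiv : ∀ x ∈ uIcc (0:ℝ) r,
      HasDerivAt (fun s : ℝ => (1 - s ^ 2) ^ (-(α / 2)) / α)
        (x * (1 - x ^ 2) ^ (-(1 + α / 2))) x := by
    intro x hx
    rw [uIcc_of_le hr0.le] at hx
    have h2x : (0:ℝ) < 1 - x ^ 2 := by nlinarith [hx.1, hx.2]
    have hbase : HasDerivAt (fun s : ℝ => 1 - s ^ 2) (-(2 * x)) x := by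
      simpa using (hasDerivAt_pow 2 x).const_sub 1
    have h := (hbase.rpow_const (p := -(α / 2)) (Or.inl h2x.ne')).div_const α
    refine h.congr_deriv ?_
    rw [show (-(1 + α / 2) : ℝ) = -(α / 2) - 1 by ring]
    field_simp
  have hval : (∫ x in (0:ℝ)..r, x * (1 - x ^ 2) ^ (-(1 + α / 2)))
      = (1 - r ^ 2) ^ (-(α / 2)) / α - (1 - (0:ℝ) ^ 2) ^ (-(α / 2)) / α :=
    intervalIntegral.integral_eq_sub_of_hasDerivAt hderiv hint
  have hC : (∫ x in (0:ℝ)..r, x * (1 - x ^ 2) ^ (-(1 + α / 2))) ≤ 1 / α * Gg α r := by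
    rw [hval]
    have h0 : ((1 - (0:ℝ) ^ 2)) ^ (-(α / 2)) = 1 := by norm_num
    rw [h0]
    unfold Gg
    have hainv : (0:ℝ) < 1 / α := by positivity
    have : (1 - r ^ 2) ^ (-(α / 2)) / α = 1 / α * (1 - r ^ 2) ^ (-(α / 2)) := by ring
    rw [this]
    nlinarith [hainv]
  refine le_trans (lintegral_Ioo_ofReal_le hr0.le hint
    (fun x hx => mul_nonneg hx.1.le
      (Real.rpow_nonneg (by nlinarith [hx.1, hx.2, hr1] : (0:ℝ) ≤ 1 - x ^ 2) _)) hC) ?_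
  rw [ENNReal.ofReal_mul (by positivity)]

lemma condition1 {α : ℝ} (hα0 : 0 < α) (hα1 : α < 1) {s : ℝ} (hs : s ∈ Ioo (0:ℝ) 1) :
    ∫⁻ r in Ioo (0:ℝ) 1, K0 s r * ENNReal.ofReal (Hh α r)
      ≤ ENNReal.ofReal (4 / α) * ENNReal.ofReal (Hh α s) := by
  have hsplit : Ioo (0:ℝ) 1 = Ioo 0 s ∪ Ico s 1 := (Ioo_union_Ico_eq_Ioo hs.1 hs.2.le).symm
  have hd : Disjoint (Ioo (0:ℝ) s) (Ico s 1) := by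
    rw [disjoint_left]; rintro x hx hx2; exact absurd hx.2 (not_lt.2 hx2.1)
  rw [hsplit, lintegral_union measurableSet_Ico hd]
  have e1 : ∫⁻ r in Ioo (0:ℝ) s, K0 s r * ENNReal.ofReal (Hh α r)
      = ∫⁻ r in Ioo (0:ℝ) s, ENNReal.ofReal (r / s) * ENNReal.ofReal (Hh α r) :=
    setLIntegral_congr_fun measurableSet_Ioo
      (fun r hr => by rw [K0, if_pos hr.2])
  have e2 : ∫⁻ r in Ico s (1:ℝ), K0 s r * ENNReal.ofReal (Hh α r)
      = ∫⁻ r in Ioo s (1:ℝ), ENNReal.ofReal (r * s / (1 - s ^ 2)) * ENNReal.ofReal (Hh α r) := by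
    rw [← setLIntegral_congr (Ioo_ae_eq_Ico (a := s) (b := (1:ℝ)))]
    exact setLIntegral_congr_fun measurableSet_Ioo
      (fun r hr => by rw [K0, if_neg (not_lt.2 hr.1.le)])
  rw [e1, e2]
  refine le_trans (add_le_add (L1 hα0 hα1 hs) (L2 hα0 hα1 hs)) (le_of_eq ?_)
  rw [← add_mul, ← ENNReal.ofReal_add (by positivity) (by positivity),
    show (2:ℝ) / α + 2 / α = 4 / α by ring]

lemma condition2 {α : ℝ} (hα0 : 0 < α) (hα1 : α < 1) {r : ℝ} (hr : r ∈ Ioo (0:ℝ) 1) :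
    ∫⁻ s in Ioo (0:ℝ) 1, K0 s r * ENNReal.ofReal (Gg α s)
      ≤ ENNReal.ofReal (5 / α) * ENNReal.ofReal (Gg α r) := by
  have hsplit : Ioo (0:ℝ) 1 = Ioo 0 r ∪ Ico r 1 := (Ioo_union_Ico_eq_Ioo hr.1 hr.2.le).symm
  have hd : Disjoint (Ioo (0:ℝ) r) (Ico r 1) := by
    rw [disjoint_left]; rintro x hx hx2; exact absurd hx.2 (not_lt.2 hx2.1)
  rw [hsplit, lintegral_union measurableSet_Ico hd]
  have e1 : ∫⁻ s in Ioo (0:ℝ) r, K0 s r * ENNReal.ofReal (Gg α s)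
      = ∫⁻ s in Ioo (0:ℝ) r, ENNReal.ofReal (r * s / (1 - s ^ 2)) * ENNReal.ofReal (Gg α s) :=
    setLIntegral_congr_fun measurableSet_Ioo
      (fun x hx => by rw [K0, if_neg (not_lt.2 hx.2.le)])
  have e2 : ∫⁻ s in Ico r (1:ℝ), K0 s r * ENNReal.ofReal (Gg α s)
      = ∫⁻ s in Ioo r (1:ℝ), ENNReal.ofReal (r / s) * ENNReal.ofReal (Gg α s) := by
    rw [← setLIntegral_congr (Ioo_ae_eq_Ico (a := r) (b := (1:ℝ)))]
    exact setLIntegral_congr_fun measurableSet_Ioo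
      (fun x hx => by rw [K0, if_pos hx.1])
  rw [e1, e2]
  refine le_trans (add_le_add (L4 hα0 hα1 hr) (L3 hα0 hα1 hr)) ?_
  rw [← add_mul, ← ENNReal.ofReal_add (by positivity) (by norm_num)]
  apply mul_le_mul_left
  apply ENNReal.ofReal_le_ofReal
  rw [div_add' _ _ _ hα0.ne', div_le_div_iff₀ hα0 hα0]
  nlinarith

lemma pointwiseA {f : ℝ → ℂ} (hf : Measurable f) {s : ℝ} (hs : s ∈ Ioo (0:ℝ) 1) :
    (‖T0 f s‖₊ : ℝ≥0∞) ≤ ∫⁻ r in Ioo (0:ℝ) 1, K0 s r * (‖f r‖₊ : ℝ≥0∞) := by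
  have hs0 := hs.1; have hs1 := hs.2
  have h2 : (0:ℝ) < 1 - s ^ 2 := one_sub_sq_pos hs
  have b1 : (‖∫ r in Ioo (0:ℝ) s, ((r / s : ℝ) : ℂ) * f r‖₊ : ℝ≥0∞)
      ≤ ∫⁻ r in Ioo (0:ℝ) s, K0 s r * (‖f r‖₊ : ℝ≥0∞) := by
    refine le_trans (enorm_integral_le_lintegral_enorm _) (le_of_eq ?_)
    refine setLIntegral_congr_fun measurableSet_Ioo (fun r hr => ?_)
    rw [enorm_eq_nnnorm, K0, if_pos hr.2, nnnorm_mul, ENNReal.coe_mul, Complex.nnnorm_real,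
      ← enorm_eq_nnnorm (r / s), Real.enorm_eq_ofReal (div_nonneg hr.1.le hs0.le)]
  have b2 : (‖∫ r in Ioo s (1:ℝ), ((r * s : ℝ) : ℂ) * f r‖₊ : ℝ≥0∞)
      ≤ ∫⁻ r in Ioo s (1:ℝ), ENNReal.ofReal (r * s) * (‖f r‖₊ : ℝ≥0∞) := by
    refine le_trans (enorm_integral_le_lintegral_enorm _) (le_of_eq ?_)
    refine setLIntegral_congr_fun measurableSet_Ioo (fun r hr => ?_)
    have hr0 : 0 < r := lt_trans hs0 hr.1
    rw [enorm_eq_nnnorm, nnnorm_mul, ENNReal.coe_mul, Complex.nnnorm_real,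
      ← enorm_eq_nnnorm (r * s), Real.enorm_eq_ofReal (mul_nonneg hr0.le hs0.le)]
  have step1 : (‖T0 f s‖₊ : ℝ≥0∞)
      ≤ (‖∫ r in Ioo (0:ℝ) s, ((r / s : ℝ) : ℂ) * f r‖₊ : ℝ≥0∞)
        + ENNReal.ofReal (1 / (1 - s ^ 2))
          * (‖∫ r in Ioo s (1:ℝ), ((r * s : ℝ) : ℂ) * f r‖₊ : ℝ≥0∞) := by
    rw [T0]
    refine le_trans (ENNReal.coe_le_coe.2 (nnnorm_add_le _ _)) ?_
    rw [ENNReal.coe_add, nnnorm_neg, nnnorm_mul, ENNReal.coe_mul, Complex.nnnorm_real,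
      ← enorm_eq_nnnorm (1 / (1 - s ^ 2) : ℝ), Real.enorm_eq_ofReal (by positivity : (0:ℝ) ≤ 1 / (1 - s ^ 2))]
  have b2' : ENNReal.ofReal (1 / (1 - s ^ 2))
        * (‖∫ r in Ioo s (1:ℝ), ((r * s : ℝ) : ℂ) * f r‖₊ : ℝ≥0∞)
      ≤ ∫⁻ r in Ioo s (1:ℝ), K0 s r * (‖f r‖₊ : ℝ≥0∞) := by
    refine le_trans (mul_le_mul_right b2 _) (le_of_eq ?_)
    rw [← lintegral_const_mul' _ _ ENNReal.ofReal_ne_top]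
    refine setLIntegral_congr_fun measurableSet_Ioo (fun r hr => ?_)
    rw [K0, if_neg (not_lt.2 hr.1.le), ← mul_assoc,
      ← ENNReal.ofReal_mul (by positivity : (0:ℝ) ≤ 1 / (1 - s ^ 2)),
      show 1 / (1 - s ^ 2) * (r * s) = r * s / (1 - s ^ 2) by ring]
  have hd : Disjoint (Ioo (0:ℝ) s) (Ioo s 1) := by
    rw [disjoint_left]; rintro x hx hx2; exact absurd hx.2 (not_lt.2 hx2.1.le)
  calc (‖T0 f s‖₊ : ℝ≥0∞)
      ≤ (∫⁻ r in Ioo (0:ℝ) s, K0 s r * (‖f r‖₊ : ℝ≥0∞))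
        + ∫⁻ r in Ioo s (1:ℝ), K0 s r * (‖f r‖₊ : ℝ≥0∞) :=
        le_trans step1 (add_le_add b1 b2')
    _ = ∫⁻ r in Ioo (0:ℝ) s ∪ Ioo s 1, K0 s r * (‖f r‖₊ : ℝ≥0∞) :=
        (lintegral_union measurableSet_Ioo hd).symm
    _ ≤ ∫⁻ r in Ioo (0:ℝ) 1, K0 s r * (‖f r‖₊ : ℝ≥0∞) :=
        lintegral_mono_set (union_subset (Ioo_subset_Ioo_right hs1.le)
          (Ioo_subset_Ioo_left hs0.le))

lemma schurCS {α : ℝ} (hα0 : 0 < α) (hα1 : α < 1) {nf : ℝ → ℝ≥0∞}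
    (hnf : Measurable nf) (s : ℝ) :
    (∫⁻ r in Ioo (0:ℝ) 1, K0 s r * nf r) ^ 2
      ≤ (∫⁻ r in Ioo (0:ℝ) 1, K0 s r * ENNReal.ofReal (Hh α r))
        * (∫⁻ r in Ioo (0:ℝ) 1, K0 s r * nf r ^ 2 * (ENNReal.ofReal (Hh α r))⁻¹) := by
  set μ := volume.restrict (Ioo (0:ℝ) 1) with hμ
  set u : ℝ → ℝ≥0∞ := fun r => (K0 s r * ENNReal.ofReal (Hh α r)) ^ (1/2 : ℝ) with hu
  set v : ℝ → ℝ≥0∞ := fun r =>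
    (K0 s r * nf r ^ 2 * (ENNReal.ofReal (Hh α r))⁻¹) ^ (1/2 : ℝ) with hv
  have hHm : Measurable fun r : ℝ => ENNReal.ofReal (Hh α r) := by
    unfold Hh; fun_prop
  have hum : Measurable u := ((K0_measurable s).mul hHm).pow_const _
  have hvm : Measurable v :=
    (((K0_measurable s).mul (hnf.pow_const 2)).mul hHm.inv).pow_const _
  have huv : ∀ᵐ r ∂μ, u r * v r = K0 s r * nf r := by
    rw [hμ, ae_restrict_iff' measurableSet_Ioo]
    refine ae_of_all _ fun r hr => ?_
    have hH0 : ENNReal.ofReal (Hh α r) ≠ 0 :=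
      (ENNReal.ofReal_pos.2 (Hh_pos hr)).ne'
    rw [hu, hv]
    dsimp only
    rw [← ENNReal.mul_rpow_of_nonneg _ _ (by norm_num : (0:ℝ) ≤ 1/2)]
    rw [show (K0 s r * ENNReal.ofReal (Hh α r)) * (K0 s r * nf r ^ 2 * (ENNReal.ofReal (Hh α r))⁻¹)
        = (K0 s r * nf r) ^ 2 * (ENNReal.ofReal (Hh α r) * (ENNReal.ofReal (Hh α r))⁻¹) by ring,
      ENNReal.mul_inv_cancel hH0 ENNReal.ofReal_ne_top, mul_one,
      ← ENNReal.rpow_two, ← ENNReal.rpow_mul]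
    norm_num
  have hpq : Real.HolderConjugate 2 2 := Real.HolderConjugate.two_two
  have hCS := ENNReal.lintegral_mul_le_Lp_mul_Lq μ hpq hum.aemeasurable hvm.aemeasurable
  have e1 : ∫⁻ r, (u * v) r ∂μ = ∫⁻ r in Ioo (0:ℝ) 1, K0 s r * nf r :=
    lintegral_congr_ae huv
  have e2 : ∀ r, u r ^ (2:ℝ) = K0 s r * ENNReal.ofReal (Hh α r) := fun r => by
    rw [hu]; dsimp only; rw [← ENNReal.rpow_mul]; norm_num
  have e3 : ∀ r, v r ^ (2:ℝ) = K0 s r * nf r ^ 2 * (ENNReal.ofReal (Hh α r))⁻¹ := fun r => by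
    rw [hv]; dsimp only; rw [← ENNReal.rpow_mul]; norm_num
  rw [← e1]
  calc (∫⁻ r, (u * v) r ∂μ) ^ 2
      ≤ ((∫⁻ r, u r ^ (2:ℝ) ∂μ) ^ (1/(2:ℝ)) * (∫⁻ r, v r ^ (2:ℝ) ∂μ) ^ (1/(2:ℝ))) ^ 2 :=
        pow_le_pow_left₀ (zero_le) hCS 2
    _ = (∫⁻ r, u r ^ (2:ℝ) ∂μ) * (∫⁻ r, v r ^ (2:ℝ) ∂μ) := by
        rw [mul_pow, ← ENNReal.rpow_two, ← ENNReal.rpow_two,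
          ← ENNReal.rpow_mul, ← ENNReal.rpow_mul]
        norm_num
    _ = _ := by
        rw [lintegral_congr fun r => e2 r, lintegral_congr fun r => e3 r]

end Stmt10Aux

theorem stmt10 (α : ℝ) (hα0 : 0 < α) (hα1 : α < 1) (f : ℝ → ℂ) (hf : Measurable f)
    (hf2 : (∫⁻ r in Ioo (0:ℝ) 1,
        (‖f r‖₊ : ℝ≥0∞)^2 * ENNReal.ofReal ((1 - r^2) ^ (1 - α) * r)) < ⊤) :
    ∫⁻ s in Ioo (0:ℝ) 1,
        (‖T0 f s‖₊ : ℝ≥0∞)^2 * ENNReal.ofReal ((1 - s^2) ^ (1 - α) * s)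
      ≤ ENNReal.ofReal ((5 / α^2)^2) *
        ∫⁻ r in Ioo (0:ℝ) 1,
          (‖f r‖₊ : ℝ≥0∞)^2 * ENNReal.ofReal ((1 - r^2) ^ (1 - α) * r) := by
  classical
  open Stmt10Aux in
  have hmeasH : Measurable fun r : ℝ => ENNReal.ofReal (Hh α r) := by
    unfold Stmt10Aux.Hh; fun_prop
  set nf : ℝ → ℝ≥0∞ := fun r => (‖f r‖₊ : ℝ≥0∞) with hnf
  have hnfm : Measurable nf := hf.enorm
  set Ψ : ℝ → ℝ≥0∞ := fun s =>
    ∫⁻ r in Ioo (0:ℝ) 1, K0 s r * nf r ^ 2 * (ENNReal.ofReal (Hh α r))⁻¹ with hΨ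
  set I := ∫⁻ r in Ioo (0:ℝ) 1, nf r ^ 2 * ENNReal.ofReal ((1 - r^2) ^ (1 - α) * r) with hI
  have step12 : ∫⁻ s in Ioo (0:ℝ) 1,
        (‖T0 f s‖₊ : ℝ≥0∞)^2 * ENNReal.ofReal ((1 - s^2) ^ (1 - α) * s)
      ≤ ∫⁻ s in Ioo (0:ℝ) 1,
        ENNReal.ofReal (4/α) * (Ψ s * ENNReal.ofReal (Gg α s)) := by
    apply lintegral_mono_ae
    rw [ae_restrict_iff' measurableSet_Ioo]
    refine ae_of_all _ fun s hs => ?_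
    calc (‖T0 f s‖₊ : ℝ≥0∞)^2 * ENNReal.ofReal ((1 - s^2) ^ (1 - α) * s)
        ≤ ((∫⁻ r in Ioo (0:ℝ) 1, K0 s r * nf r) ^ 2) * ENNReal.ofReal (ww α s) := by
          apply mul_le_mul_left
          exact pow_le_pow_left₀ (zero_le) (pointwiseA hf hs) 2
      _ ≤ ((ENNReal.ofReal (4/α) * ENNReal.ofReal (Hh α s)) * Ψ s)
            * ENNReal.ofReal (ww α s) := by
          apply mul_le_mul_left
          exact le_trans (schurCS hα0 hα1 hnfm s)
            (mul_le_mul_left (condition1 hα0 hα1 hs) _)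
      _ = ENNReal.ofReal (4/α)
            * (Ψ s * (ENNReal.ofReal (Hh α s) * ENNReal.ofReal (ww α s))) := by ring
      _ = ENNReal.ofReal (4/α) * (Ψ s * ENNReal.ofReal (Gg α s)) := by
          rw [← ENNReal.ofReal_mul (Hh_pos hs).le, Hh_mul_ww hs]
  have step4 : ∫⁻ s in Ioo (0:ℝ) 1, ENNReal.ofReal (4/α) * (Ψ s * ENNReal.ofReal (Gg α s))
      = ENNReal.ofReal (4/α) * ∫⁻ s in Ioo (0:ℝ) 1, Ψ s * ENNReal.ofReal (Gg α s) :=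
    lintegral_const_mul' _ _ ENNReal.ofReal_ne_top
  have step5 : ∫⁻ s in Ioo (0:ℝ) 1, Ψ s * ENNReal.ofReal (Gg α s)
      = ∫⁻ s in Ioo (0:ℝ) 1, ∫⁻ r in Ioo (0:ℝ) 1,
          (K0 s r * nf r ^ 2 * (ENNReal.ofReal (Hh α r))⁻¹) * ENNReal.ofReal (Gg α s) := by
    refine lintegral_congr fun s => ?_
    exact (lintegral_mul_const' _ _ ENNReal.ofReal_ne_top).symm
  have hFm : Measurable (Function.uncurry fun s r : ℝ =>
      (K0 s r * nf r ^ 2 * (ENNReal.ofReal (Hh α r))⁻¹) * ENNReal.ofReal (Gg α s)) := by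
    have h1 : Measurable fun p : ℝ × ℝ => K0 p.1 p.2 := K0_uncurry_measurable
    have h2 : Measurable fun p : ℝ × ℝ => nf p.2 ^ 2 :=
      (hnfm.comp measurable_snd).pow_const 2
    have h3 : Measurable fun p : ℝ × ℝ => (ENNReal.ofReal (Hh α p.2))⁻¹ :=
      (hmeasH.comp measurable_snd).inv
    have h4 : Measurable fun p : ℝ × ℝ => ENNReal.ofReal (Gg α p.1) := by
      unfold Stmt10Aux.Gg; fun_prop
    exact ((h1.mul h2).mul h3).mul h4
  have step6 : ∫⁻ s in Ioo (0:ℝ) 1, ∫⁻ r in Ioo (0:ℝ) 1,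
          (K0 s r * nf r ^ 2 * (ENNReal.ofReal (Hh α r))⁻¹) * ENNReal.ofReal (Gg α s)
      = ∫⁻ r in Ioo (0:ℝ) 1, ∫⁻ s in Ioo (0:ℝ) 1,
          (K0 s r * nf r ^ 2 * (ENNReal.ofReal (Hh α r))⁻¹) * ENNReal.ofReal (Gg α s) :=
    lintegral_lintegral_swap hFm.aemeasurable
  have step7 : ∫⁻ r in Ioo (0:ℝ) 1, (∫⁻ s in Ioo (0:ℝ) 1,
          (K0 s r * nf r ^ 2 * (ENNReal.ofReal (Hh α r))⁻¹) * ENNReal.ofReal (Gg α s))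
      ≤ ∫⁻ r in Ioo (0:ℝ) 1,
          ENNReal.ofReal (5/α) * (nf r ^ 2 * ENNReal.ofReal ((1 - r^2) ^ (1 - α) * r)) := by
    apply lintegral_mono_ae
    rw [ae_restrict_iff' measurableSet_Ioo]
    refine ae_of_all _ fun r hr => ?_
    have hH0 : ENNReal.ofReal (Hh α r) ≠ 0 := (ENNReal.ofReal_pos.2 (Hh_pos hr)).ne'
    have hcne : nf r ^ 2 * (ENNReal.ofReal (Hh α r))⁻¹ ≠ ⊤ :=
      ENNReal.mul_ne_top (ENNReal.pow_ne_top ENNReal.coe_ne_top) (ENNReal.inv_ne_top.2 hH0)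
    calc ∫⁻ s in Ioo (0:ℝ) 1,
            (K0 s r * nf r ^ 2 * (ENNReal.ofReal (Hh α r))⁻¹) * ENNReal.ofReal (Gg α s)
        = (nf r ^ 2 * (ENNReal.ofReal (Hh α r))⁻¹)
            * ∫⁻ s in Ioo (0:ℝ) 1, K0 s r * ENNReal.ofReal (Gg α s) := by
          rw [← lintegral_const_mul' _ _ hcne]
          exact lintegral_congr fun s => by ring
      _ ≤ (nf r ^ 2 * (ENNReal.ofReal (Hh α r))⁻¹)
            * (ENNReal.ofReal (5/α) * ENNReal.ofReal (Gg α r)) :=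
          mul_le_mul_right (condition2 hα0 hα1 hr) _
      _ = ENNReal.ofReal (5/α)
            * (nf r ^ 2 * ENNReal.ofReal ((1 - r^2) ^ (1 - α) * r)) := by
          have hGg : ENNReal.ofReal (Gg α r)
              = ENNReal.ofReal (Hh α r) * ENNReal.ofReal (ww α r) := by
            rw [← ENNReal.ofReal_mul (Hh_pos hr).le, Hh_mul_ww hr]
          rw [hGg, show (nf r ^ 2 * (ENNReal.ofReal (Hh α r))⁻¹)
              * (ENNReal.ofReal (5/α)
                * (ENNReal.ofReal (Hh α r) * ENNReal.ofReal (ww α r)))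
              = (ENNReal.ofReal (5/α) * (nf r ^ 2 * ENNReal.ofReal (ww α r)))
                * ((ENNReal.ofReal (Hh α r))⁻¹ * ENNReal.ofReal (Hh α r)) by ring,
            ENNReal.inv_mul_cancel hH0 ENNReal.ofReal_ne_top, mul_one]
          rfl
  have step8 : ∫⁻ r in Ioo (0:ℝ) 1,
        ENNReal.ofReal (5/α) * (nf r ^ 2 * ENNReal.ofReal ((1 - r^2) ^ (1 - α) * r))
      = ENNReal.ofReal (5/α) * I :=
    lintegral_const_mul' _ _ ENNReal.ofReal_ne_top
  refine le_trans step12 ?_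
  rw [step4, step5, step6]
  refine le_trans (mul_le_mul_right (le_trans step7 (le_of_eq step8)) _) ?_
  rw [← mul_assoc, ← ENNReal.ofReal_mul (by positivity)]
  apply mul_le_mul_left
  apply ENNReal.ofReal_le_ofReal
  have hα2 : α^2 ≤ 1 := by nlinarith
  rw [show (4/α) * (5/α) = 20/α^2 by ring, show ((5:ℝ)/α^2)^2 = 25/α^4 by ring,
    div_le_div_iff₀ (by positivity) (by positivity)]
  nlinarith [mul_le_mul_of_nonneg_left hα2 (by positivity : (0:ℝ) ≤ 20 * α^2)]
end

section
/- Let 0 < α < 1 and for each integer l ≥ 1 define, for f ∈ L²_α[0,1], the operator (T_l f)(s) = (1/(1 − s²)) ∫_s^1 (s/r)^{l−1} f(r) r dr for s ∈ (0,1). Then each T_l is bounded on L²_α[0,1] and ‖T_l‖ ≤ 8/α², uniformly in l. -/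
open MeasureTheory Real Set ENNReal NNReal

/-- The operator `T_l`, `l ≥ 1`, of the radial decomposition:
`(T_l f)(s) = (1/(1-s²)) ∫_s^1 (s/r)^(l-1) f(r) r dr`. -/
noncomputable def Tl (l : ℕ) (f : ℝ → ℂ) (s : ℝ) : ℂ :=
  ((1 / (1 - s^2) : ℝ) : ℂ) * ∫ r in Ioo s (1:ℝ), (((s / r) ^ (l - 1) * r : ℝ) : ℂ) * f r

lemma myInt1 {c : ℝ} (hc : -1 < c) {s : ℝ} (hs1 : s < 1) :
    ∫⁻ r in Ioo s 1, ENNReal.ofReal ((1 - r) ^ c) =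
      ENNReal.ofReal ((1 - s) ^ (c + 1) / (c + 1)) := by
  have hii : IntervalIntegrable (fun x : ℝ => (1 - x) ^ c) volume s 1 := by
    have := (intervalIntegral.intervalIntegrable_rpow' (a := 1 - s) (b := 1 - 1) hc).comp_sub_left 1
    simpa using this
  have hint : IntegrableOn (fun x : ℝ => (1 - x) ^ c) (Ioo s 1) :=
    hii.1.mono_set Ioo_subset_Ioc_self
  rw [← ofReal_integral_eq_lintegral_ofReal hint ?nn]
  case nn =>
    filter_upwards [self_mem_ae_restrict measurableSet_Ioo] with r hr
    exact rpow_nonneg (by linarith [hr.2]) c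
  congr 1
  have h1 : ∫ r in Ioo s 1, (1 - r) ^ c = ∫ r in s..1, (1 - r) ^ c := by
    rw [intervalIntegral.integral_of_le hs1.le, integral_Ioc_eq_integral_Ioo]
  rw [h1, intervalIntegral.integral_comp_sub_left (fun u => u ^ c) 1]
  norm_num
  rw [integral_rpow (Or.inl hc), Real.zero_rpow (by linarith)]
  ring

lemma myInt2 {c : ℝ} (hc : c < -1) {a b : ℝ} (hab : a ≤ b) (hb : b < 1) :
    ∫⁻ x in Ioo a b, ENNReal.ofReal ((1 - x) ^ c) =
      ENNReal.ofReal (((1 - a) ^ (c + 1) - (1 - b) ^ (c + 1)) / (c + 1)) := by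
  have h0 : (0:ℝ) < 1 - b := by linarith
  have h0' : (0:ℝ) < 1 - a := by linarith
  have hii : IntervalIntegrable (fun x : ℝ => (1 - x) ^ c) volume a b := by
    have h0m : (0:ℝ) ∉ Set.uIcc (1 - a) (1 - b) := notMem_uIcc_of_lt h0' h0
    have := (intervalIntegral.intervalIntegrable_rpow (μ := volume) (r := c) (a := 1 - a)
      (b := 1 - b) (Or.inr h0m)).comp_sub_left 1
    simpa using this
  have hint : IntegrableOn (fun x : ℝ => (1 - x) ^ c) (Ioo a b) :=
    hii.1.mono_set Ioo_subset_Ioc_self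
  rw [← ofReal_integral_eq_lintegral_ofReal hint ?nn]
  case nn =>
    filter_upwards [self_mem_ae_restrict measurableSet_Ioo] with r hr
    exact rpow_nonneg (by linarith [hr.2]) c
  congr 1
  have h1 : ∫ r in Ioo a b, (1 - r) ^ c = ∫ r in a..b, (1 - r) ^ c := by
    rw [intervalIntegral.integral_of_le hab, integral_Ioc_eq_integral_Ioo]
  rw [h1, intervalIntegral.integral_comp_sub_left (fun u => u ^ c) 1]
  rw [integral_rpow (Or.inr ⟨by linarith, notMem_uIcc_of_lt h0 h0'⟩)]

lemma real_aux {x γ : ℝ} (hx0 : 0 < x) (hx1 : x < 1) (hγ : 0 ≤ γ) :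
    x * (1 - x^2) ^ (-γ) ≤ (1 - x) ^ (-γ) := by
  have h1x : (0:ℝ) < 1 - x := by linarith
  have h1x' : (0:ℝ) < 1 + x := by linarith
  have hx2 : 1 - x^2 = (1 - x) * (1 + x) := by ring
  rw [hx2, Real.mul_rpow h1x.le h1x'.le]
  have h2 : (1 + x) ^ (-γ) ≤ 1 :=
    Real.rpow_le_one_of_one_le_of_nonpos (by linarith) (neg_nonpos.2 hγ)
  have hA : 0 ≤ (1 - x) ^ (-γ) := Real.rpow_nonneg h1x.le _
  calc x * ((1 - x) ^ (-γ) * (1 + x) ^ (-γ)) ≤ 1 * ((1 - x) ^ (-γ) * 1) := by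
        apply mul_le_mul hx1.le (mul_le_mul_of_nonneg_left h2 hA) ?_ zero_le_one
        positivity
    _ = (1 - x) ^ (-γ) := by ring

lemma CS2 {X : Type*} [MeasurableSpace X] {μ : Measure X} (A B : X → ℝ≥0∞)
    (hA : AEMeasurable A μ) (hB : AEMeasurable B μ) :
    (∫⁻ x, A x * B x ∂μ) ^ 2 ≤ (∫⁻ x, A x ^ 2 ∂μ) * (∫⁻ x, B x ^ 2 ∂μ) := by
  have hpq : Real.HolderConjugate 2 2 := ⟨by norm_num, by norm_num, by norm_num⟩
  have h := ENNReal.lintegral_mul_le_Lp_mul_Lq μ hpq hA hB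
  have h2 : ∀ Z : X → ℝ≥0∞, (∫⁻ x, Z x ^ (2:ℝ) ∂μ) = ∫⁻ x, Z x ^ 2 ∂μ := by
    intro Z; congr 1; ext x; rw [← ENNReal.rpow_natCast (Z x) 2]; norm_num
  rw [h2 A, h2 B] at h
  calc (∫⁻ x, A x * B x ∂μ) ^ 2
      ≤ ((∫⁻ x, A x ^ 2 ∂μ) ^ (1/(2:ℝ)) * (∫⁻ x, B x ^ 2 ∂μ) ^ (1/(2:ℝ))) ^ 2 :=
        pow_le_pow_left' h 2
    _ = (∫⁻ x, A x ^ 2 ∂μ) * (∫⁻ x, B x ^ 2 ∂μ) := by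
        rw [mul_pow, ← ENNReal.rpow_natCast (_ ^ (1/(2:ℝ))) 2,
          ← ENNReal.rpow_natCast (_ ^ (1/(2:ℝ))) 2, ← ENNReal.rpow_mul, ← ENNReal.rpow_mul]
        norm_num

lemma Tl_bound (l : ℕ) (f : ℝ → ℂ) {s : ℝ} (hs0 : 0 < s) (hs1 : s < 1) :
    (‖Tl l f s‖₊ : ℝ≥0∞) ≤ ENNReal.ofReal (1/(1 - s^2)) *
      ∫⁻ r in Ioo s 1, (‖f r‖₊ : ℝ≥0∞) * ENNReal.ofReal r := by
  have hs2 : (0:ℝ) < 1 - s^2 := by nlinarith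
  rw [Tl, nnnorm_mul, ENNReal.coe_mul]
  refine mul_le_mul' ?_ ?_
  · rw [Complex.nnnorm_real, ← enorm_eq_nnnorm, Real.enorm_eq_ofReal (by positivity)]
  · calc (‖∫ r in Ioo s (1:ℝ), (((s / r) ^ (l - 1) * r : ℝ) : ℂ) * f r‖₊ : ℝ≥0∞)
        ≤ ∫⁻ r in Ioo s 1, ‖(((s / r) ^ (l - 1) * r : ℝ) : ℂ) * f r‖₊ :=
          enorm_integral_le_lintegral_enorm _
      _ ≤ ∫⁻ r in Ioo s 1, (‖f r‖₊ : ℝ≥0∞) * ENNReal.ofReal r := by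
          apply lintegral_mono_ae
          filter_upwards [self_mem_ae_restrict measurableSet_Ioo] with r hr
          obtain ⟨hsr, hr1⟩ := hr
          have hr0 : 0 < r := hs0.trans hsr
          rw [nnnorm_mul, ENNReal.coe_mul, mul_comm]
          apply mul_le_mul' le_rfl
          have hx0 : 0 ≤ (s / r) ^ (l - 1) * r := by positivity
          have hxr : (s / r) ^ (l - 1) * r ≤ r := by
            have h1 : (s / r) ^ (l - 1) ≤ 1 :=
              pow_le_one₀ (by positivity) (by rw [div_le_one hr0]; exact hsr.le)
            nlinarith
          rw [Complex.nnnorm_real, ← enorm_eq_nnnorm, Real.enorm_eq_ofReal hx0]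
          exact ENNReal.ofReal_le_ofReal hxr

lemma CS_step {α : ℝ} (hα0 : 0 < α) (hα1 : α < 1) (f : ℝ → ℂ) (hf : Measurable f)
    {s : ℝ} (hs0 : 0 < s) (hs1 : s < 1) :
    (∫⁻ r in Ioo s 1, (‖f r‖₊ : ℝ≥0∞) * ENNReal.ofReal r)^2 ≤
      ENNReal.ofReal ((2/α) * (1 - s^2)^(α/2)) *
      ∫⁻ r in Ioo s 1, (‖f r‖₊ : ℝ≥0∞)^2 * ENNReal.ofReal (r * (1 - r^2)^(1 - α/2)) := by
  have hβ0 : (0:ℝ) < 1 - α/2 := by linarith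
  have hβ1 : (1:ℝ) - α/2 < 1 := by linarith
  set A : ℝ → ℝ≥0∞ := fun r => (ENNReal.ofReal (r * (1 - r^2)^(-(1 - α/2))))^((2:ℝ)⁻¹) with hA
  set B : ℝ → ℝ≥0∞ :=
    fun r => (‖f r‖₊ : ℝ≥0∞) * (ENNReal.ofReal (r * (1 - r^2)^(1 - α/2)))^((2:ℝ)⁻¹) with hB
  have hsq : ∀ x : ℝ≥0∞, (x ^ ((2:ℝ)⁻¹))^2 = x := by
    intro x; rw [← ENNReal.rpow_natCast (x ^ _) 2, ← ENNReal.rpow_mul]; norm_num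
  have hABeq : ∀ r ∈ Ioo s 1, (‖f r‖₊ : ℝ≥0∞) * ENNReal.ofReal r = A r * B r := by
    rintro r ⟨hsr, hr1⟩
    have hr0 : 0 < r := hs0.trans hsr
    have hx : (0:ℝ) < 1 - r^2 := by nlinarith
    rw [hA, hB]
    dsimp only
    rw [mul_left_comm]
    congr 1
    rw [← ENNReal.mul_rpow_of_nonneg _ _ (by norm_num : (0:ℝ) ≤ (2:ℝ)⁻¹),
      ← ENNReal.ofReal_mul (by positivity)]
    have hrr : r * (1 - r^2)^(-(1 - α/2)) * (r * (1 - r^2)^(1 - α/2)) = r^2 := by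
      rw [Real.rpow_neg hx.le]
      field_simp
    rw [hrr, ENNReal.ofReal_rpow_of_nonneg (by positivity) (by norm_num)]
    congr 1
    rw [← Real.rpow_natCast r 2, ← Real.rpow_mul hr0.le]
    norm_num
  have hAmeas : AEMeasurable A (volume.restrict (Ioo s 1)) := by
    apply Measurable.aemeasurable; rw [hA]; fun_prop
  have hBmeas : AEMeasurable B (volume.restrict (Ioo s 1)) := by
    apply Measurable.aemeasurable; rw [hB]; fun_prop
  calc (∫⁻ r in Ioo s 1, (‖f r‖₊ : ℝ≥0∞) * ENNReal.ofReal r)^2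
      = (∫⁻ r in Ioo s 1, A r * B r)^2 := by
        rw [setLIntegral_congr_fun_ae measurableSet_Ioo (ae_of_all _ hABeq)]
    _ ≤ (∫⁻ r in Ioo s 1, A r ^ 2) * (∫⁻ r in Ioo s 1, B r ^ 2) := CS2 A B hAmeas hBmeas
    _ ≤ ENNReal.ofReal ((2/α) * (1 - s^2)^(α/2)) *
        ∫⁻ r in Ioo s 1, (‖f r‖₊ : ℝ≥0∞)^2 * ENNReal.ofReal (r * (1 - r^2)^(1 - α/2)) := by
        apply mul_le_mul'
        · -- first factor
          calc ∫⁻ r in Ioo s 1, A r ^ 2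
              = ∫⁻ r in Ioo s 1, ENNReal.ofReal (r * (1 - r^2)^(-(1 - α/2))) := by
                apply lintegral_congr; intro r; rw [hA]; exact hsq _
            _ ≤ ∫⁻ r in Ioo s 1, ENNReal.ofReal ((1 - r)^(-(1 - α/2))) := by
                apply lintegral_mono_ae
                filter_upwards [self_mem_ae_restrict measurableSet_Ioo] with r hr
                obtain ⟨hsr, hr1⟩ := hr
                exact ENNReal.ofReal_le_ofReal (real_aux (hs0.trans hsr) hr1 hβ0.le)
            _ = ENNReal.ofReal ((1 - s)^(-(1 - α/2) + 1) / (-(1 - α/2) + 1)) :=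
                myInt1 (by linarith) hs1
            _ ≤ ENNReal.ofReal ((2/α) * (1 - s^2)^(α/2)) := by
                apply ENNReal.ofReal_le_ofReal
                have he : -(1 - α/2) + 1 = α/2 := by ring
                rw [he]
                have h1 : (1 - s)^(α/2) ≤ (1 - s^2)^(α/2) :=
                  Real.rpow_le_rpow (by linarith) (by nlinarith) (by positivity)
                calc (1 - s)^(α/2) / (α/2) = (2/α) * (1 - s)^(α/2) := by
                      field_simp
                  _ ≤ (2/α) * (1 - s^2)^(α/2) := by
                      apply mul_le_mul_of_nonneg_left h1 (by positivity)
        · -- second factor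
          apply le_of_eq
          apply lintegral_congr
          intro r
          rw [hB]
          dsimp only
          rw [mul_pow, hsq]

lemma swap_lemma (Φ Ψ : ℝ → ℝ≥0∞) (hΦ : Measurable Φ) (hΨ : Measurable Ψ) :
    (∫⁻ s in Ioo (0:ℝ) 1, Φ s * ∫⁻ r in Ioo s 1, Ψ r)
      = ∫⁻ r in Ioo (0:ℝ) 1, (∫⁻ s in Ioo 0 r, Φ s) * Ψ r := by
  set K : ℝ × ℝ → ℝ≥0∞ := fun p => {q : ℝ × ℝ | q.1 < q.2}.indicator (fun q => Φ q.1 * Ψ q.2) p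
    with hK
  have hmeas : Measurable K := by
    apply Measurable.indicator
    · exact (hΦ.comp measurable_fst).mul (hΨ.comp measurable_snd)
    · exact measurableSet_lt measurable_fst measurable_snd
  have h1 : ∀ s ∈ Ioo (0:ℝ) 1,
      Φ s * (∫⁻ r in Ioo s 1, Ψ r) = ∫⁻ r in Ioo (0:ℝ) 1, K (s, r) := by
    rintro s ⟨hs0, hs1⟩
    have heq : ∀ r : ℝ, K (s, r) = (Ioi s).indicator (fun r => Φ s * Ψ r) r := by
      intro r
      by_cases h : s < r <;>
        simp [hK, Set.indicator_apply, h, Set.mem_Ioi, Set.mem_setOf_eq]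
    simp_rw [heq]
    rw [lintegral_indicator measurableSet_Ioi, Measure.restrict_restrict measurableSet_Ioi]
    have hset : Ioi s ∩ Ioo (0:ℝ) 1 = Ioo s 1 := by
      ext x
      simp only [mem_inter_iff, mem_Ioi, mem_Ioo]
      constructor
      · rintro ⟨u1, _, u3⟩; exact ⟨u1, u3⟩
      · rintro ⟨u1, u2⟩; exact ⟨u1, hs0.trans u1, u2⟩
    rw [hset, lintegral_const_mul _ hΨ]
  have h2 : ∀ r ∈ Ioo (0:ℝ) 1,
      (∫⁻ s in Ioo (0:ℝ) 1, K (s, r)) = (∫⁻ s in Ioo 0 r, Φ s) * Ψ r := by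
    rintro r ⟨hr0, hr1⟩
    have heq : ∀ s : ℝ, K (s, r) = (Iio r).indicator (fun s => Φ s * Ψ r) s := by
      intro s
      by_cases h : s < r <;>
        simp [hK, Set.indicator_apply, h, Set.mem_Iio, Set.mem_setOf_eq]
    simp_rw [heq]
    rw [lintegral_indicator measurableSet_Iio, Measure.restrict_restrict measurableSet_Iio]
    have hset : Iio r ∩ Ioo (0:ℝ) 1 = Ioo 0 r := by
      ext x
      simp only [mem_inter_iff, mem_Iio, mem_Ioo]
      constructor
      · rintro ⟨u1, u2, _⟩; exact ⟨u2, u1⟩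
      · rintro ⟨u1, u2⟩; exact ⟨u2, u1, u2.trans hr1⟩
    rw [hset, lintegral_mul_const _ hΦ]
  calc (∫⁻ s in Ioo (0:ℝ) 1, Φ s * ∫⁻ r in Ioo s 1, Ψ r)
      = ∫⁻ s in Ioo (0:ℝ) 1, ∫⁻ r in Ioo (0:ℝ) 1, K (s, r) :=
        setLIntegral_congr_fun_ae measurableSet_Ioo (ae_of_all _ h1)
    _ = ∫⁻ r in Ioo (0:ℝ) 1, ∫⁻ s in Ioo (0:ℝ) 1, K (s, r) :=
        lintegral_lintegral_swap hmeas.aemeasurable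
    _ = ∫⁻ r in Ioo (0:ℝ) 1, (∫⁻ s in Ioo 0 r, Φ s) * Ψ r :=
        setLIntegral_congr_fun_ae measurableSet_Ioo (ae_of_all _ h2)

lemma inner_step {α : ℝ} (hα0 : 0 < α) (hα1 : α < 1) {r : ℝ} (hr0 : 0 < r) (hr1 : r < 1) :
    ∫⁻ s in Ioo (0:ℝ) r, ENNReal.ofReal ((2/α) * (1 - s)^(-(1 + α/2)))
      ≤ ENNReal.ofReal ((8/α^2) * (1 - r^2)^(-(α/2))) := by
  have hx : (0:ℝ) < 1 - r^2 := by nlinarith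
  have h1r : (0:ℝ) < 1 - r := by linarith
  have hcalc : ∫⁻ s in Ioo (0:ℝ) r, ENNReal.ofReal ((2/α) * (1 - s)^(-(1 + α/2)))
      = ENNReal.ofReal (2/α) * ∫⁻ s in Ioo (0:ℝ) r, ENNReal.ofReal ((1 - s)^(-(1 + α/2))) := by
    rw [← lintegral_const_mul'' _ (by fun_prop)]
    apply lintegral_congr
    intro s
    rw [ENNReal.ofReal_mul (by positivity)]
  rw [hcalc, myInt2 (by linarith) hr0.le hr1]
  rw [← ENNReal.ofReal_mul (by positivity)]
  apply ENNReal.ofReal_le_ofReal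
  have he : -(1 + α/2) + 1 = -(α/2) := by ring
  rw [he]
  have hbc : (1 - r)^(-(α/2)) ≤ 2 * (1 - r^2)^(-(α/2)) := by
    have hpow : (1 - r^2)^(α/2) ≤ 2 * (1 - r)^(α/2) := by
      calc (1 - r^2)^(α/2) ≤ (2*(1 - r))^(α/2) :=
            Real.rpow_le_rpow hx.le (by nlinarith) (by positivity)
        _ = 2^(α/2) * (1 - r)^(α/2) := Real.mul_rpow (by norm_num) h1r.le
        _ ≤ 2 * (1 - r)^(α/2) := by
            apply mul_le_mul_of_nonneg_right ?_ (Real.rpow_nonneg h1r.le _)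
            calc (2:ℝ)^(α/2) ≤ 2^(1:ℝ) :=
                  Real.rpow_le_rpow_of_exponent_le one_le_two (by linarith)
              _ = 2 := Real.rpow_one 2
    have ha : (0:ℝ) < (1 - r)^(α/2) := Real.rpow_pos_of_pos h1r _
    have hb : (0:ℝ) < (1 - r^2)^(α/2) := Real.rpow_pos_of_pos hx _
    rw [Real.rpow_neg h1r.le, Real.rpow_neg hx.le, inv_eq_one_div, inv_eq_one_div,
      mul_one_div, div_le_div_iff₀ ha hb]
    nlinarith
  have h10 : (1:ℝ) - 0 = 1 := by norm_num
  rw [h10, Real.one_rpow]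
  have hu : (0:ℝ) ≤ (1 - r)^(-(α/2)) := Real.rpow_nonneg h1r.le _
  have hv : (0:ℝ) ≤ (1 - r^2)^(-(α/2)) := Real.rpow_nonneg hx.le _
  have e2 : (2/α) * ((1 - (1 - r)^(-(α/2)))/(-(α/2)))
      = (4/α^2) * ((1 - r)^(-(α/2)) - 1) := by
    field_simp
    ring
  rw [e2]
  have : (4/α^2) * ((1 - r)^(-(α/2)) - 1) ≤ (4/α^2) * (2 * (1 - r^2)^(-(α/2))) := by
    apply mul_le_mul_of_nonneg_left (by linarith) (by positivity)
  calc (4/α^2) * ((1 - r)^(-(α/2)) - 1) ≤ (4/α^2) * (2 * (1 - r^2)^(-(α/2))) := this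
    _ = (8/α^2) * (1 - r^2)^(-(α/2)) := by ring

lemma coef_real {α s : ℝ} (hα0 : 0 < α) (hα1 : α < 1) (hs0 : 0 < s) (hs1 : s < 1) :
    (1 - s^2)^(1 - α) * s * ((1/(1 - s^2))^2 * ((2/α) * (1 - s^2)^(α/2)))
      ≤ (2/α) * (1 - s)^(-(1 + α/2)) := by
  have hs2 : (0:ℝ) < 1 - s^2 := by nlinarith
  have key := real_aux hs0 hs1 (γ := 1 + α/2) (by linarith)
  have h2 : (1/(1 - s^2))^2 = (1 - s^2)^(-(2:ℝ)) := by
    rw [Real.rpow_neg hs2.le, one_div, inv_pow, ← Real.rpow_natCast (1 - s^2) 2]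
    norm_num
  have h4 : (1 - s^2)^(1 - α) * (1 - s^2)^(-(2:ℝ)) * (1 - s^2)^(α/2)
      = (1 - s^2)^(-(1 + α/2)) := by
    rw [← Real.rpow_add hs2, ← Real.rpow_add hs2]
    congr 1
    ring
  have e1 : (1 - s^2)^(1 - α) * s * ((1/(1 - s^2))^2 * ((2/α) * (1 - s^2)^(α/2)))
      = (2/α) * (s * ((1 - s^2)^(1 - α) * (1 - s^2)^(-(2:ℝ)) * (1 - s^2)^(α/2))) := by
    rw [h2]; ring
  rw [e1, h4]
  exact mul_le_mul_of_nonneg_left key (by positivity)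

theorem stmt11 (α : ℝ) (hα0 : 0 < α) (hα1 : α < 1) (l : ℕ) (hl : 1 ≤ l)
    (f : ℝ → ℂ) (hf : Measurable f)
    (hf2 : (∫⁻ r in Ioo (0:ℝ) 1,
        (‖f r‖₊ : ℝ≥0∞)^2 * ENNReal.ofReal ((1 - r^2) ^ (1 - α) * r)) < ⊤) :
    ∫⁻ s in Ioo (0:ℝ) 1,
        (‖Tl l f s‖₊ : ℝ≥0∞)^2 * ENNReal.ofReal ((1 - s^2) ^ (1 - α) * s)
      ≤ ENNReal.ofReal ((8 / α^2)^2) *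
        ∫⁻ r in Ioo (0:ℝ) 1,
          (‖f r‖₊ : ℝ≥0∞)^2 * ENNReal.ofReal ((1 - r^2) ^ (1 - α) * r) := by
  set Ψ : ℝ → ℝ≥0∞ :=
    fun r => (‖f r‖₊ : ℝ≥0∞)^2 * ENNReal.ofReal (r * (1 - r^2)^(1 - α/2)) with hΨ
  set Φ : ℝ → ℝ≥0∞ := fun s => ENNReal.ofReal ((2/α) * (1 - s)^(-(1 + α/2))) with hΦ
  have hΨmeas : Measurable Ψ := by rw [hΨ]; fun_prop
  have hΦmeas : Measurable Φ := by rw [hΦ]; fun_prop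
  have step3 : ∀ s ∈ Ioo (0:ℝ) 1,
      (‖Tl l f s‖₊ : ℝ≥0∞)^2 * ENNReal.ofReal ((1 - s^2) ^ (1 - α) * s) ≤
        Φ s * ∫⁻ r in Ioo s 1, Ψ r := by
    rintro s ⟨hs0, hs1⟩
    have hs2 : (0:ℝ) < 1 - s^2 := by nlinarith
    have h1 := Tl_bound l f hs0 hs1
    have h2 := CS_step hα0 hα1 f hf hs0 hs1
    calc (‖Tl l f s‖₊ : ℝ≥0∞)^2 * ENNReal.ofReal ((1 - s^2) ^ (1 - α) * s)
        ≤ (ENNReal.ofReal (1/(1 - s^2)) *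
              ∫⁻ r in Ioo s 1, (‖f r‖₊ : ℝ≥0∞) * ENNReal.ofReal r)^2 *
            ENNReal.ofReal ((1 - s^2) ^ (1 - α) * s) :=
          mul_le_mul_left (pow_le_pow_left' h1 2) _
      _ = ENNReal.ofReal (1/(1 - s^2))^2 *
            (∫⁻ r in Ioo s 1, (‖f r‖₊ : ℝ≥0∞) * ENNReal.ofReal r)^2 *
            ENNReal.ofReal ((1 - s^2) ^ (1 - α) * s) := by rw [mul_pow]
      _ ≤ ENNReal.ofReal (1/(1 - s^2))^2 *
            (ENNReal.ofReal ((2/α) * (1 - s^2)^(α/2)) * ∫⁻ r in Ioo s 1, Ψ r) *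
            ENNReal.ofReal ((1 - s^2) ^ (1 - α) * s) := by
          apply mul_le_mul_left
          exact mul_le_mul_right h2 _
      _ = (ENNReal.ofReal ((1 - s^2) ^ (1 - α) * s) *
            (ENNReal.ofReal (1/(1 - s^2))^2 * ENNReal.ofReal ((2/α) * (1 - s^2)^(α/2)))) *
            ∫⁻ r in Ioo s 1, Ψ r := by ring
      _ ≤ Φ s * ∫⁻ r in Ioo s 1, Ψ r := by
          apply mul_le_mul_left
          rw [hΦ]
          rw [← ENNReal.ofReal_pow (by positivity), ← ENNReal.ofReal_mul (by positivity),
            ← ENNReal.ofReal_mul (by positivity)]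
          exact ENNReal.ofReal_le_ofReal (coef_real hα0 hα1 hs0 hs1)
  calc ∫⁻ s in Ioo (0:ℝ) 1,
        (‖Tl l f s‖₊ : ℝ≥0∞)^2 * ENNReal.ofReal ((1 - s^2) ^ (1 - α) * s)
      ≤ ∫⁻ s in Ioo (0:ℝ) 1, Φ s * ∫⁻ r in Ioo s 1, Ψ r := by
        apply lintegral_mono_ae
        filter_upwards [self_mem_ae_restrict measurableSet_Ioo] with s hs
        exact step3 s hs
    _ = ∫⁻ r in Ioo (0:ℝ) 1, (∫⁻ s in Ioo 0 r, Φ s) * Ψ r :=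
        swap_lemma Φ Ψ hΦmeas hΨmeas
    _ ≤ ∫⁻ r in Ioo (0:ℝ) 1, ENNReal.ofReal (8/α^2) *
          ((‖f r‖₊ : ℝ≥0∞)^2 * ENNReal.ofReal ((1 - r^2) ^ (1 - α) * r)) := by
        apply lintegral_mono_ae
        filter_upwards [self_mem_ae_restrict measurableSet_Ioo] with r hr
        obtain ⟨hr0, hr1⟩ := hr
        have hx : (0:ℝ) < 1 - r^2 := by nlinarith
        have h5 := inner_step hα0 hα1 hr0 hr1
        calc (∫⁻ s in Ioo 0 r, Φ s) * Ψ r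
            ≤ ENNReal.ofReal ((8/α^2) * (1 - r^2)^(-(α/2))) * Ψ r := by
              apply mul_le_mul_left
              rw [hΦ]
              exact h5
          _ = ENNReal.ofReal (8/α^2) *
              ((‖f r‖₊ : ℝ≥0∞)^2 * ENNReal.ofReal ((1 - r^2) ^ (1 - α) * r)) := by
              rw [hΨ]
              dsimp only
              have e : (1 - r^2)^(-(α/2)) * (r * (1 - r^2)^(1 - α/2))
                  = (1 - r^2)^(1 - α) * r := by
                calc (1 - r^2)^(-(α/2)) * (r * (1 - r^2)^(1 - α/2))
                    = ((1 - r^2)^(-(α/2)) * (1 - r^2)^(1 - α/2)) * r := by ring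
                  _ = (1 - r^2)^(1 - α) * r := by
                      rw [← Real.rpow_add hx,
                        show (-(α/2) + (1 - α/2)) = 1 - α from by ring]
              rw [ENNReal.ofReal_mul (by positivity), ← e,
                ENNReal.ofReal_mul (by positivity : (0:ℝ) ≤ (1 - r^2)^(-(α/2)))]
              ring
    _ = ENNReal.ofReal (8/α^2) * ∫⁻ r in Ioo (0:ℝ) 1,
          (‖f r‖₊ : ℝ≥0∞)^2 * ENNReal.ofReal ((1 - r^2) ^ (1 - α) * r) := by
        rw [lintegral_const_mul _ (by fun_prop)]
    _ ≤ ENNReal.ofReal ((8 / α^2)^2) * ∫⁻ r in Ioo (0:ℝ) 1,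
          (‖f r‖₊ : ℝ≥0∞)^2 * ENNReal.ofReal ((1 - r^2) ^ (1 - α) * r) := by
        apply mul_le_mul_left
        apply ENNReal.ofReal_le_ofReal
        have h8 : (1:ℝ) ≤ 8/α^2 := by
          rw [le_div_iff₀ (by positivity)]
          nlinarith
        nlinarith
end
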